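/- arXiv:2507.09415 — 5 statements merged into one kernel-verified Lean document; each statement's English description precedes it below -/
import Mathlib

section
/- Let G:[0,1]²→ℝ be bounded, measurable, and nonnegative, and let Q solve Q(t,u) = 1 + ∫_t^T ∫_0^1 G(v,u) Q(s,v) dv ds. If u₁, u₂ ∈ [0,1] satisfy G(v,u₁) ≤ G(v,u₂) for all v ∈ [0,1], then Q(t,u₁) ≤ Q(t,u₂) for all t ∈ [0,T]. -/
open MeasureTheory intervalIntegral Set Filter

theorem stmt_1 (T : ℝ) (hT : 0 < T) (G Q : ℝ → ℝ → ℝ)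
    (hGm : Measurable (Function.uncurry G))
    (hGb : ∃ M, ∀ u v, |G u v| ≤ M)
    (hGpos : ∀ u ∈ Icc (0:ℝ) 1, ∀ v ∈ Icc (0:ℝ) 1, 0 ≤ G u v)
    (hQm : ∀ t, Measurable (Q t))
    (hQb : ∃ M, ∀ t u, |Q t u| ≤ M)
    (hQc : ∀ u, Continuous fun t => Q t u)
    (hQeq : ∀ t ∈ Icc (0:ℝ) T, ∀ u ∈ Icc (0:ℝ) 1,
      Q t u = 1 + ∫ s in t..T, ∫ v in (0:ℝ)..(1:ℝ), G v u * Q s v)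
    (u₁ u₂ : ℝ) (hu₁ : u₁ ∈ Icc (0:ℝ) 1) (hu₂ : u₂ ∈ Icc (0:ℝ) 1)
    (hinfl : ∀ v ∈ Icc (0:ℝ) 1, G v u₁ ≤ G v u₂) :
    ∀ t ∈ Icc (0:ℝ) T, Q t u₁ ≤ Q t u₂ := by
  obtain ⟨MG, hMG⟩ := hGb
  obtain ⟨MQ, hMQ⟩ := hQb
  have hMG0 : 0 ≤ MG := le_trans (abs_nonneg _) (hMG 0 0)
  have hMQ0 : 0 ≤ MQ := le_trans (abs_nonneg _) (hMQ 0 0)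
  have hGmu : ∀ u, Measurable fun v => G v u := fun u =>
    hGm.comp (measurable_id.prodMk measurable_const)
  -- interval integrability of the inner integrand
  have hinner_int : ∀ s u, IntervalIntegrable (fun v => G v u * Q s v) volume 0 1 := by
    intro s u
    rw [intervalIntegrable_iff_integrableOn_Ioc_of_le zero_le_one]
    refine Integrable.mono' (g := fun _ => MG * MQ)
      (integrableOn_const measure_Ioc_lt_top.ne)
      ((hGmu u).mul (hQm s)).aestronglyMeasurable ?_
    filter_upwards with v
    rw [Real.norm_eq_abs, abs_mul]
    exact mul_le_mul (hMG v u) (hMQ s v) (abs_nonneg _) hMG0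
  -- continuity of the outer integrand
  have hIcont : ∀ u, Continuous fun s => ∫ v in (0:ℝ)..(1:ℝ), G v u * Q s v := by
    intro u
    have : ∀ s, (∫ v in (0:ℝ)..(1:ℝ), G v u * Q s v)
        = ∫ v in Ioc (0:ℝ) 1, G v u * Q s v := fun s =>
      intervalIntegral.integral_of_le zero_le_one
    simp only [this]
    refine continuous_of_dominated (bound := fun _ => MG * MQ)
      (fun s => ((hGmu u).mul (hQm s)).aestronglyMeasurable) ?_
      (integrableOn_const measure_Ioc_lt_top.ne) ?_
    · intro s
      filter_upwards with v
      rw [Real.norm_eq_abs, abs_mul]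
      exact mul_le_mul (hMG v u) (hMQ s v) (abs_nonneg _) hMG0
    · filter_upwards with v
      exact continuous_const.mul (hQc v)
  have hIint : ∀ (t : ℝ) u, IntervalIntegrable
      (fun s => ∫ v in (0:ℝ)..(1:ℝ), G v u * Q s v) volume t T := fun t u =>
    (hIcont u).intervalIntegrable t T
  -- the key Gronwall-type estimate
  have key : ∀ n : ℕ, ∀ u ∈ Icc (0:ℝ) 1, ∀ t ∈ Icc (0:ℝ) T,
      -Q t u ≤ MQ * (MG * (T - t)) ^ n / n.factorial := by
    intro n
    induction n with
    | zero =>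
      intro u hu t ht
      simp only [pow_zero, Nat.factorial_zero, Nat.cast_one, mul_one, div_one]
      linarith [(abs_le.1 (hMQ t u)).1]
    | succ n ih =>
      intro u hu t ht
      have hTt : 0 ≤ T - t := sub_nonneg.2 ht.2
      -- pointwise lower bound on inner integral for s ∈ [t, T]
      have hinner : ∀ s ∈ Icc t T,
          -(MG * (MQ * (MG * (T - s)) ^ n / n.factorial))
            ≤ ∫ v in (0:ℝ)..(1:ℝ), G v u * Q s v := by
        intro s hs
        have hsT : s ∈ Icc (0:ℝ) T := ⟨le_trans ht.1 hs.1, hs.2⟩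
        have hbnd0 : 0 ≤ MQ * (MG * (T - s)) ^ n / n.factorial := by
          apply div_nonneg _ (Nat.cast_nonneg _)
          exact mul_nonneg hMQ0 (pow_nonneg (mul_nonneg hMG0 (sub_nonneg.2 hs.2)) n)
        have : (∫ v in (0:ℝ)..(1:ℝ),
            (-(MG * (MQ * (MG * (T - s)) ^ n / n.factorial) : ℝ)))
            ≤ ∫ v in (0:ℝ)..(1:ℝ), G v u * Q s v := by
          refine intervalIntegral.integral_mono_on zero_le_one
            (intervalIntegrable_const) (hinner_int s u) ?_
          intro v hv
          have hG0 : 0 ≤ G v u := hGpos v hv u hu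
          have hGle : G v u ≤ MG := le_trans (le_abs_self _) (hMG v u)
          have hQge : -(MQ * (MG * (T - s)) ^ n / n.factorial) ≤ Q s v := by
            have := ih v hv s hsT
            linarith
          calc -(MG * (MQ * (MG * (T - s)) ^ n / n.factorial))
              ≤ -(G v u * (MQ * (MG * (T - s)) ^ n / n.factorial)) := by
                have := mul_le_mul_of_nonneg_right hGle hbnd0
                linarith
            _ = G v u * (-(MQ * (MG * (T - s)) ^ n / n.factorial)) := by ring
            _ ≤ G v u * Q s v := mul_le_mul_of_nonneg_left hQge hG0
        simpa using this
      -- integrate the bound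
      have houter : -(∫ s in t..T, ∫ v in (0:ℝ)..(1:ℝ), G v u * Q s v)
          ≤ MG * MQ * (MG * (T - t)) ^ n * (T - t) / ((n + 1) * n.factorial) := by
        have h1 : (∫ s in t..T,
            (-(MG * (MQ * (MG * (T - s)) ^ n / n.factorial) : ℝ)))
            ≤ ∫ s in t..T, ∫ v in (0:ℝ)..(1:ℝ), G v u * Q s v := by
          refine intervalIntegral.integral_mono_on ht.2 ?_ (hIint t u) hinner
          exact (Continuous.intervalIntegrable (by fun_prop) t T)
        have hJ : (∫ s in t..T, (T - s) ^ n) = (T - t) ^ (n + 1) / (n + 1) := by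
          rw [intervalIntegral.integral_comp_sub_left (fun x => x ^ n) T]
          simp [integral_pow]
        have h2 : (∫ s in t..T,
            (-(MG * (MQ * (MG * (T - s)) ^ n / n.factorial) : ℝ)))
            = (-(MG * MQ * MG ^ n / n.factorial)) * ((T - t) ^ (n + 1) / (n + 1)) := by
          have : ∀ s : ℝ, (-(MG * (MQ * (MG * (T - s)) ^ n / n.factorial) : ℝ))
              = (-(MG * MQ * MG ^ n / n.factorial)) * (T - s) ^ n := by
            intro s; rw [mul_pow]; ring
          simp_rw [this]
          rw [intervalIntegral.integral_const_mul, hJ]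
        rw [h2] at h1
        have hfac : (0:ℝ) < n.factorial := by positivity
        have : (-(MG * MQ * MG ^ n / n.factorial)) * ((T - t) ^ (n + 1) / (n + 1))
            = -(MG * MQ * (MG * (T - t)) ^ n * (T - t) / ((n + 1) * n.factorial)) := by
          rw [mul_pow]; field_simp; ring
        rw [this] at h1
        linarith
      have heq := hQeq t ht u hu
      have hfac : (0:ℝ) < n.factorial := by positivity
      have hexp : MQ * (MG * (T - t)) ^ (n + 1) / (n + 1).factorial
          = MG * MQ * (MG * (T - t)) ^ n * (T - t) / ((n + 1) * n.factorial) := by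
        rw [Nat.factorial_succ, pow_succ]
        push_cast
        field_simp
      rw [hexp, heq]
      have : (0:ℝ) < 1 := one_pos
      linarith
  -- nonnegativity of Q
  have hQpos : ∀ s ∈ Icc (0:ℝ) T, ∀ v ∈ Icc (0:ℝ) 1, 0 ≤ Q s v := by
    intro s hs v hv
    have hlim : Tendsto (fun n : ℕ => MQ * (MG * (T - s)) ^ n / n.factorial)
        atTop (nhds 0) := by
      have h := (FloorSemiring.tendsto_pow_div_factorial_atTop (K := ℝ)
        (MG * (T - s))).const_mul MQ
      simpa [mul_div_assoc] using h
    have h := ge_of_tendsto' hlim (fun n => key n v hv s hs)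
    linarith
  -- conclusion
  intro t ht
  rw [hQeq t ht u₁ hu₁, hQeq t ht u₂ hu₂]
  refine add_le_add_right ?_ 1
  refine intervalIntegral.integral_mono_on ht.2 (hIint t u₁) (hIint t u₂) ?_
  intro s hs
  refine intervalIntegral.integral_mono_on zero_le_one
    (hinner_int s u₁) (hinner_int s u₂) ?_
  intro v hv
  exact mul_le_mul_of_nonneg_right (hinfl v hv)
    (hQpos s ⟨le_trans ht.1 hs.1, hs.2⟩ v hv)
end

section
/- Let ν₁ = N(m₁, σ₁²) and ν₂ = N(m₂, σ₂²) be one-dimensional Gaussian measures. Then the squared Wasserstein-2 distance between ν₁ and ν₂ equals (m₁ − m₂)² + (σ₁ − σ₂)². -/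
open MeasureTheory Set

/-- The Wasserstein-2 distance between two probability measures on ℝ:
the infimum over couplings `κ` of `(∫ |x-y|² dκ)^{1/2}`. -/
noncomputable def W2 (μ ν : Measure ℝ) : ℝ :=
  sInf {c : ℝ | ∃ κ : Measure (ℝ × ℝ), IsProbabilityMeasure κ ∧
    κ.map Prod.fst = μ ∧ κ.map Prod.snd = ν ∧
    c = ((∫⁻ p, ENNReal.ofReal (|p.1 - p.2| ^ 2) ∂κ) ^ (1/2 : ℝ)).toReal}

section StmtAux
open MeasureTheory Real Set ProbabilityTheory
open scoped ENNReal NNReal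

set_option linter.unusedSectionVars false

namespace StmtAux


lemma half_pow : ((1/2:ℝ)) ^ (-((2:ℝ)+1)/2 : ℝ) = 2 * √2 := by
  rw [show (-((2:ℝ)+1)/2 : ℝ) = -(3/2 : ℝ) by norm_num, one_div,
    Real.inv_rpow (by norm_num), ← Real.rpow_neg (by norm_num), neg_neg,
    show (3/2:ℝ) = 1 + 1/2 by norm_num, Real.rpow_add (by norm_num), Real.rpow_one,
    ← Real.sqrt_eq_rpow]

lemma int_exp : ∫ x : ℝ, rexp (-x^2/2) = √(2*π) := by
  simp_rw [show ∀ x : ℝ, -x^2/2 = -(1/2)*x^2 from fun x => by ring]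
  rw [integral_gaussian, show π/(1/2) = 2*π by ring]

lemma int_x_exp : ∫ x : ℝ, x * rexp (-x^2/2) = 0 := by
  have h := integral_neg_eq_self (fun x : ℝ => x * rexp (-x^2/2)) volume
  simp only [neg_sq, neg_mul] at h
  rw [integral_neg] at h
  linarith [h]

lemma int_sq_exp : ∫ x : ℝ, x^2 * rexp (-x^2/2) = √2 * √π := by
  have habs : (fun x : ℝ => x^2 * rexp (-x^2/2)) = fun x => |x|^2 * rexp (-|x|^2/2) := by
    ext x; rw [sq_abs]
  rw [habs, integral_comp_abs (f := fun x => x^2 * rexp (-x^2/2))]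
  have h2 : ∫ x in Ioi (0:ℝ), x ^ (2:ℝ) * rexp (-(1/2) * x ^ (2:ℝ))
      = (1/2:ℝ) ^ (-((2:ℝ)+1)/2) * (1/2) * Real.Gamma (((2:ℝ)+1)/2) :=
    integral_rpow_mul_exp_neg_mul_rpow (by norm_num) (by norm_num) (by norm_num)
  simp only [show ∀ x : ℝ, x ^ (2:ℝ) = x ^ (2:ℕ) from fun x => Real.rpow_natCast x 2] at h2
  rw [show (fun x : ℝ => x^2 * rexp (-x^2/2)) = fun x : ℝ => x^2 * rexp (-(1/2) * x^2) by
    ext x; ring_nf]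
  rw [h2, half_pow]
  have hg : Real.Gamma (((2:ℝ)+1)/2) = √π / 2 := by
    rw [show ((2:ℝ)+1)/2 = 1/2 + 1 by norm_num, Real.Gamma_add_one (by norm_num),
      Real.Gamma_one_half_eq]
    ring
  rw [hg]; ring

lemma integrable_x_exp : Integrable (fun x : ℝ => x * rexp (-x^2/2)) := by
  have := integrable_mul_exp_neg_mul_sq (b := 1/2) (by norm_num)
  simp only [show ∀ x : ℝ, -(1/2)*x^2 = -x^2/2 from fun x => by ring] at this
  exact this

lemma integrable_sq_exp : Integrable (fun x : ℝ => x^2 * rexp (-x^2/2)) := by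
  have := integrable_rpow_mul_exp_neg_mul_sq (b := 1/2) (by norm_num) (s := 2) (by norm_num)
  simp only [show ∀ x : ℝ, x ^ (2:ℝ) = x ^ (2:ℕ) from fun x => Real.rpow_natCast x 2] at this
  simp only [show ∀ x : ℝ, -(1/2)*x^2 = -x^2/2 from fun x => by ring] at this
  exact this

lemma integrable_exp' : Integrable (fun x : ℝ => rexp (-x^2/2)) := by
  have := integrable_exp_neg_mul_sq (b := 1/2) (by norm_num)
  simp only [show ∀ x : ℝ, -(1/2)*x^2 = -x^2/2 from fun x => by ring] at this
  exact this

lemma pdf01 (x : ℝ) : gaussianPDFReal 0 1 x = (√(2*π))⁻¹ * rexp (-x^2/2) := by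
  simp [gaussianPDFReal]

lemma gamma_withDensity : gaussianReal 0 1
    = volume.withDensity (fun x => ((gaussianPDFReal 0 1 x).toNNReal : ℝ≥0∞)) := by
  rw [gaussianReal_of_var_ne_zero _ one_ne_zero]
  rfl

lemma integral_std (g : ℝ → ℝ) :
    ∫ x, g x ∂(gaussianReal 0 1) = ∫ x, gaussianPDFReal 0 1 x * g x := by
  rw [gamma_withDensity,
    integral_withDensity_eq_integral_smul (measurable_gaussianPDFReal 0 1).real_toNNReal]
  congr 1 with x
  rw [NNReal.smul_def, Real.coe_toNNReal _ (gaussianPDFReal_nonneg 0 1 x), smul_eq_mul]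

lemma integrable_std_iff (g : ℝ → ℝ) :
    Integrable g (gaussianReal 0 1) ↔ Integrable (fun x => gaussianPDFReal 0 1 x * g x) := by
  rw [gamma_withDensity,
    integrable_withDensity_iff_integrable_smul (measurable_gaussianPDFReal 0 1).real_toNNReal]
  apply integrable_congr
  filter_upwards with x
  rw [NNReal.smul_def, Real.coe_toNNReal _ (gaussianPDFReal_nonneg 0 1 x), smul_eq_mul]

lemma integrable_id_std : Integrable (fun x => x) (gaussianReal 0 1) := by
  rw [integrable_std_iff]
  have : (fun x => gaussianPDFReal 0 1 x * x) = fun x => (√(2*π))⁻¹ * (x * rexp (-x^2/2)) := by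
    ext x; rw [pdf01]; ring
  rw [this]
  exact integrable_x_exp.const_mul _

lemma integrable_sq_std : Integrable (fun x => x^2) (gaussianReal 0 1) := by
  rw [integrable_std_iff]
  have : (fun x => gaussianPDFReal 0 1 x * x^2)
      = fun x => (√(2*π))⁻¹ * (x^2 * rexp (-x^2/2)) := by
    ext x; rw [pdf01]; ring
  rw [this]
  exact integrable_sq_exp.const_mul _

lemma integral_id_std : ∫ x, x ∂(gaussianReal 0 1) = 0 := by
  rw [integral_std]
  have : (fun x => gaussianPDFReal 0 1 x * x) = fun x => (√(2*π))⁻¹ * (x * rexp (-x^2/2)) := by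
    ext x; rw [pdf01]; ring
  rw [this, integral_const_mul, int_x_exp, mul_zero]

lemma integral_sq_std : ∫ x, x^2 ∂(gaussianReal 0 1) = 1 := by
  rw [integral_std]
  have : (fun x => gaussianPDFReal 0 1 x * x^2)
      = fun x => (√(2*π))⁻¹ * (x^2 * rexp (-x^2/2)) := by
    ext x; rw [pdf01]; ring
  rw [this, integral_const_mul, int_sq_exp, Real.sqrt_mul (by norm_num)]
  rw [inv_mul_cancel₀]
  positivity

lemma integrable_affine_sq (a b : ℝ) :
    Integrable (fun x => (a*x+b)^2) (gaussianReal 0 1) := by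
  have : (fun x : ℝ => (a*x+b)^2) = fun x => a^2*x^2 + (2*a*b)*x + b^2 := by ext x; ring
  rw [this]
  exact ((integrable_sq_std.const_mul _).add (integrable_id_std.const_mul _)).add
    (integrable_const _)

lemma integral_affine_sq (a b : ℝ) :
    ∫ x, (a*x+b)^2 ∂(gaussianReal 0 1) = a^2 + b^2 := by
  have : (fun x : ℝ => (a*x+b)^2) = fun x => a^2*x^2 + (2*a*b)*x + b^2 := by ext x; ring
  have i2 : Integrable (fun x : ℝ => a^2*x^2) (gaussianReal 0 1) :=
    integrable_sq_std.const_mul _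
  have i3 : Integrable (fun x : ℝ => 2*a*b*x) (gaussianReal 0 1) :=
    integrable_id_std.const_mul _
  have i1 : Integrable (fun x : ℝ => a^2*x^2 + 2*a*b*x) (gaussianReal 0 1) := i2.add i3
  rw [this, integral_add i1 (integrable_const _), integral_add i2 i3,
    integral_const_mul, integral_const_mul, integral_id_std, integral_sq_std,
    integral_const]
  simp

lemma gauss_map (m : ℝ) (v : ℝ≥0) :
    gaussianReal m v = (gaussianReal 0 1).map (fun x => √v * x + m) := by
  have h1 : (gaussianReal 0 1).map (fun x => √v * x) = gaussianReal 0 v := by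
    rw [show (fun x : ℝ => √v * x) = fun x => √v * x from rfl, gaussianReal_map_const_mul]
    congr 1
    · simp
    · ext
      simp [Real.sq_sqrt v.2]
  have h2 : (fun x : ℝ => √v * x + m) = (fun x => x + m) ∘ (fun x => √v * x) := rfl
  rw [h2, ← Measure.map_map (measurable_add_const m) (measurable_const_mul _), h1,
    gaussianReal_map_add_const, zero_add]

lemma aemeas_affine (m : ℝ) (v : ℝ≥0) :
    AEMeasurable (fun x : ℝ => √v * x + m) (gaussianReal 0 1) :=
  ((measurable_const_mul _).add_const m).aemeasurable

lemma integrable_id_gauss (m : ℝ) (v : ℝ≥0) : Integrable (fun x => x) (gaussianReal m v) := by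
  rw [gauss_map m v]
  exact (integrable_map_measure measurable_id'.aestronglyMeasurable
    (aemeas_affine m v)).mpr ((integrable_id_std.const_mul _).add (integrable_const m))

lemma integrable_sq_gauss (m : ℝ) (v : ℝ≥0) :
    Integrable (fun x => x^2) (gaussianReal m v) := by
  rw [gauss_map m v]
  exact (integrable_map_measure (continuous_pow 2).aestronglyMeasurable
    (aemeas_affine m v)).mpr (integrable_affine_sq _ _)

lemma integral_id_gauss (m : ℝ) (v : ℝ≥0) : ∫ x, x ∂(gaussianReal m v) = m := by
  rw [gauss_map m v, integral_map (aemeas_affine m v) measurable_id'.aestronglyMeasurable]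
  rw [integral_add (integrable_id_std.const_mul _) (integrable_const m),
    integral_const_mul, integral_id_std, integral_const]
  simp

lemma integral_sub_sq_gauss (m : ℝ) (v : ℝ≥0) :
    ∫ x, (x - m)^2 ∂(gaussianReal m v) = v := by
  rw [gauss_map m v, integral_map (aemeas_affine m v)
    (((measurable_id'.sub_const _).pow_const 2).aestronglyMeasurable)]
  rw [show (fun x : ℝ => (√v * x + m - m)^2) = fun x => (√v * x + 0)^2 by ext x; ring]
  rw [integral_affine_sq, Real.sq_sqrt v.coe_nonneg]
  simp

section Coupling
variable {m₁ m₂ : ℝ} {s₁ s₂ : ℝ≥0} {κ : Measure (ℝ × ℝ)} [IsProbabilityMeasure κ]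
  (h1 : κ.map Prod.fst = gaussianReal m₁ (s₁^2)) (h2 : κ.map Prod.snd = gaussianReal m₂ (s₂^2))

include h1 in
lemma int_fst : Integrable (fun p : ℝ × ℝ => p.1) κ := by
  have h : Integrable (fun x => x) (κ.map Prod.fst) := h1 ▸ integrable_id_gauss m₁ (s₁^2)
  exact (integrable_map_measure measurable_id'.aestronglyMeasurable
    measurable_fst.aemeasurable).mp h

include h2 in
lemma int_snd : Integrable (fun p : ℝ × ℝ => p.2) κ := by
  have h : Integrable (fun x => x) (κ.map Prod.snd) := h2 ▸ integrable_id_gauss m₂ (s₂^2)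
  exact (integrable_map_measure measurable_id'.aestronglyMeasurable
    measurable_snd.aemeasurable).mp h

include h1 in
lemma int_fst_sq : Integrable (fun p : ℝ × ℝ => p.1^2) κ := by
  have h : Integrable (fun x => x^2) (κ.map Prod.fst) := h1 ▸ integrable_sq_gauss m₁ (s₁^2)
  exact (integrable_map_measure (continuous_pow 2).aestronglyMeasurable
    measurable_fst.aemeasurable).mp h

include h2 in
lemma int_snd_sq : Integrable (fun p : ℝ × ℝ => p.2^2) κ := by
  have h : Integrable (fun x => x^2) (κ.map Prod.snd) := h2 ▸ integrable_sq_gauss m₂ (s₂^2)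
  exact (integrable_map_measure (continuous_pow 2).aestronglyMeasurable
    measurable_snd.aemeasurable).mp h

include h1 in
lemma int_fst_val : ∫ p, p.1 ∂κ = m₁ := by
  have h : ∫ x, x ∂(κ.map Prod.fst) = m₁ := by rw [h1]; exact integral_id_gauss _ _
  rwa [integral_map measurable_fst.aemeasurable measurable_id'.aestronglyMeasurable] at h

include h2 in
lemma int_snd_val : ∫ p, p.2 ∂κ = m₂ := by
  have h : ∫ x, x ∂(κ.map Prod.snd) = m₂ := by rw [h2]; exact integral_id_gauss _ _
  rwa [integral_map measurable_snd.aemeasurable measurable_id'.aestronglyMeasurable] at h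

include h1 in
lemma int_fst_sub_sq : ∫ p, (p.1 - m₁)^2 ∂κ = (s₁:ℝ)^2 := by
  have h : ∫ x, (x - m₁)^2 ∂(κ.map Prod.fst) = (s₁:ℝ)^2 := by
    rw [h1, integral_sub_sq_gauss]; push_cast; ring
  rwa [integral_map measurable_fst.aemeasurable
    (((measurable_id'.sub_const _).pow_const 2).aestronglyMeasurable)] at h

include h2 in
lemma int_snd_sub_sq : ∫ p, (p.2 - m₂)^2 ∂κ = (s₂:ℝ)^2 := by
  have h : ∫ x, (x - m₂)^2 ∂(κ.map Prod.snd) = (s₂:ℝ)^2 := by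
    rw [h2, integral_sub_sq_gauss]; push_cast; ring
  rwa [integral_map measurable_snd.aemeasurable
    (((measurable_id'.sub_const _).pow_const 2).aestronglyMeasurable)] at h

include h1 in
lemma int_U2 : Integrable (fun p : ℝ × ℝ => (p.1 - m₁)^2) κ := by
  have : (fun p : ℝ × ℝ => (p.1 - m₁)^2)
      = fun p => p.1^2 + (-2*m₁)*p.1 + m₁^2 := by ext p; ring
  rw [this]
  exact ((int_fst_sq h1).add ((int_fst h1).const_mul _)).add (integrable_const _)

include h2 in
lemma int_V2 : Integrable (fun p : ℝ × ℝ => (p.2 - m₂)^2) κ := by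
  have : (fun p : ℝ × ℝ => (p.2 - m₂)^2)
      = fun p => p.2^2 + (-2*m₂)*p.2 + m₂^2 := by ext p; ring
  rw [this]
  exact ((int_snd_sq h2).add ((int_snd h2).const_mul _)).add (integrable_const _)

include h1 h2 in
lemma int_UV : Integrable (fun p : ℝ × ℝ => (p.1 - m₁) * (p.2 - m₂)) κ := by
  have hg : Integrable (fun p : ℝ × ℝ => ((p.1-m₁)^2 + (p.2-m₂)^2)/2) κ :=
    ((int_U2 h1).add (int_V2 h2)).div_const 2
  refine hg.mono ?_ ?_
  · exact ((measurable_fst.sub_const _).mul (measurable_snd.sub_const _)).aestronglyMeasurable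
  · filter_upwards with p
    have hn : (0:ℝ) ≤ ((p.1-m₁)^2 + (p.2-m₂)^2)/2 := by positivity
    rw [Real.norm_eq_abs, Real.norm_eq_abs, abs_mul, abs_of_nonneg hn]
    nlinarith [sq_nonneg (|p.1-m₁| - |p.2-m₂|), sq_abs (p.1-m₁), sq_abs (p.2-m₂),
      abs_nonneg (p.1-m₁), abs_nonneg (p.2-m₂)]

include h1 h2 in
lemma int_UV_le : ∫ p, (p.1 - m₁) * (p.2 - m₂) ∂κ ≤ (s₁:ℝ) * s₂ := by
  rcases eq_or_ne s₁ 0 with hs | hs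
  · have h0 : ∫ p, (p.1 - m₁)^2 ∂κ = 0 := by rw [int_fst_sub_sq h1, hs]; simp
    have hz : (fun p : ℝ × ℝ => (p.1 - m₁)^2) =ᵐ[κ] 0 :=
      (integral_eq_zero_iff_of_nonneg (fun p => sq_nonneg _) (int_U2 h1)).mp h0
    have hz2 : (fun p : ℝ × ℝ => (p.1 - m₁) * (p.2 - m₂)) =ᵐ[κ] 0 := by
      filter_upwards [hz] with p hp
      have h' : p.1 - m₁ = 0 := pow_eq_zero_iff (n := 2) (by norm_num) |>.mp hp
      simp [h']
    rw [integral_congr_ae hz2]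
    simp [hs]
  · rcases eq_or_ne s₂ 0 with hs2 | hs2
    · have h0 : ∫ p, (p.2 - m₂)^2 ∂κ = 0 := by rw [int_snd_sub_sq h2, hs2]; simp
      have hz : (fun p : ℝ × ℝ => (p.2 - m₂)^2) =ᵐ[κ] 0 :=
        (integral_eq_zero_iff_of_nonneg (fun p => sq_nonneg _) (int_V2 h2)).mp h0
      have hz2 : (fun p : ℝ × ℝ => (p.1 - m₁) * (p.2 - m₂)) =ᵐ[κ] 0 := by
        filter_upwards [hz] with p hp
        have h' : p.2 - m₂ = 0 := pow_eq_zero_iff (n := 2) (by norm_num) |>.mp hp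
        simp [h']
      rw [integral_congr_ae hz2]
      simp [hs2]
    · have hs1 : (0:ℝ) < s₁ := by positivity
      have hs2' : (0:ℝ) < s₂ := by positivity
      set t : ℝ := (s₂:ℝ) / (s₁:ℝ) with ht_def
      have ht : 0 < t := by positivity
      have iU2t : Integrable (fun p : ℝ × ℝ => t*(p.1-m₁)^2) κ := (int_U2 h1).const_mul t
      have iV2t : Integrable (fun p : ℝ × ℝ => (p.2-m₂)^2/t) κ := (int_V2 h2).div_const t
      have hrhs : Integrable (fun p : ℝ × ℝ => (t*(p.1-m₁)^2 + (p.2-m₂)^2/t)/2) κ :=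
        (iU2t.add iV2t).div_const 2
      have hle : ∫ p, (p.1 - m₁) * (p.2 - m₂) ∂κ
          ≤ ∫ p, (t*(p.1-m₁)^2 + (p.2-m₂)^2/t)/2 ∂κ := by
        refine integral_mono (int_UV h1 h2) hrhs fun p => ?_
        have hmul : (t*(p.1-m₁)^2 + (p.2-m₂)^2/t)/2
            = (t^2*(p.1-m₁)^2 + (p.2-m₂)^2)/(2*t) := by
          field_simp
        rw [hmul, le_div_iff₀ (by positivity)]
        nlinarith [sq_nonneg (t*(p.1-m₁) - (p.2-m₂))]
      have hval : ∫ p, (t*(p.1-m₁)^2 + (p.2-m₂)^2/t)/2 ∂κ = (s₁:ℝ) * s₂ := by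
        rw [integral_div, integral_add iU2t iV2t, integral_const_mul, integral_div,
          int_fst_sub_sq h1, int_snd_sub_sq h2, ht_def]
        field_simp
        ring
      rw [hval] at hle
      exact hle

include h1 h2 in
lemma int_cost : Integrable (fun p : ℝ × ℝ => (p.1 - p.2)^2) κ ∧
    (m₁-m₂)^2 + ((s₁:ℝ) - s₂)^2 ≤ ∫ p, (p.1 - p.2)^2 ∂κ := by
  set d : ℝ := m₁ - m₂ with hd
  have iA := int_U2 h1
  have iB := int_V2 h2
  have iC : Integrable (fun p : ℝ × ℝ => (-2)*((p.1-m₁)*(p.2-m₂))) κ :=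
    (int_UV h1 h2).const_mul _
  have iD : Integrable (fun p : ℝ × ℝ => (2*d)*(p.1-m₁)) κ :=
    ((int_fst h1).sub (integrable_const m₁)).const_mul _
  have iE : Integrable (fun p : ℝ × ℝ => (-2*d)*(p.2-m₂)) κ :=
    ((int_snd h2).sub (integrable_const m₂)).const_mul _
  have i1 : Integrable (fun p : ℝ × ℝ => (p.1-m₁)^2 + (p.2-m₂)^2) κ := iA.add iB
  have i2 : Integrable (fun p : ℝ × ℝ =>
      ((p.1-m₁)^2 + (p.2-m₂)^2) + (-2)*((p.1-m₁)*(p.2-m₂))) κ := i1.add iC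
  have i3 : Integrable (fun p : ℝ × ℝ =>
      (((p.1-m₁)^2 + (p.2-m₂)^2) + (-2)*((p.1-m₁)*(p.2-m₂))) + (2*d)*(p.1-m₁)) κ := i2.add iD
  have i4 : Integrable (fun p : ℝ × ℝ =>
      ((((p.1-m₁)^2 + (p.2-m₂)^2) + (-2)*((p.1-m₁)*(p.2-m₂))) + (2*d)*(p.1-m₁))
        + (-2*d)*(p.2-m₂)) κ := i3.add iE
  have i5 : Integrable (fun p : ℝ × ℝ =>
      (((((p.1-m₁)^2 + (p.2-m₂)^2) + (-2)*((p.1-m₁)*(p.2-m₂))) + (2*d)*(p.1-m₁))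
        + (-2*d)*(p.2-m₂)) + d^2) κ := i4.add (integrable_const _)
  have hsum : (fun p : ℝ × ℝ => (p.1 - p.2)^2) = fun p : ℝ × ℝ =>
      (((((p.1-m₁)^2 + (p.2-m₂)^2) + (-2)*((p.1-m₁)*(p.2-m₂))) + (2*d)*(p.1-m₁))
        + (-2*d)*(p.2-m₂)) + d^2 := by
    ext p; rw [hd]; ring
  have hD : ∫ p, (2*d)*(p.1-m₁) ∂κ = 0 := by
    rw [integral_const_mul, integral_sub (int_fst h1) (integrable_const m₁),
      int_fst_val h1, integral_const]
    simp
  have hE : ∫ p, (-2*d)*(p.2-m₂) ∂κ = 0 := by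
    rw [integral_const_mul, integral_sub (int_snd h2) (integrable_const m₂),
      int_snd_val h2, integral_const]
    simp
  have hC : ∫ p, (-2)*((p.1-m₁)*(p.2-m₂)) ∂κ ≥ (-2) * ((s₁:ℝ)*s₂) := by
    rw [integral_const_mul]
    have := int_UV_le h1 h2
    linarith
  constructor
  · rw [hsum]; exact i5
  · rw [hsum, integral_add i4 (integrable_const _), integral_add i3 iE,
      integral_add i2 iD, integral_add i1 iC, integral_add iA iB,
      int_fst_sub_sq h1, int_snd_sub_sq h2, hD, hE, integral_const]
    simp only [measure_univ, probReal_univ, ENNReal.toReal_one, smul_eq_mul, one_mul]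
    nlinarith [hC, sq_nonneg ((s₁:ℝ) - s₂)]

include h1 h2 in
lemma lintegral_cost : ∫⁻ p, ENNReal.ofReal (|p.1 - p.2| ^ 2) ∂κ
    = ENNReal.ofReal (∫ p, (p.1 - p.2)^2 ∂κ) := by
  simp_rw [sq_abs]
  exact (ofReal_integral_eq_lintegral_ofReal (int_cost h1 h2).1
    (Filter.Eventually.of_forall fun p => sq_nonneg _)).symm

end Coupling

lemma sqrt_coe_sq (s : ℝ≥0) : √(((s^2 : ℝ≥0)) : ℝ) = (s : ℝ) := by
  push_cast
  exact Real.sqrt_sq s.coe_nonneg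

lemma rpow_half_toReal {c : ℝ} (hc : 0 ≤ c) :
    ((ENNReal.ofReal c) ^ (1/2 : ℝ)).toReal = Real.sqrt c := by
  rw [← ENNReal.toReal_rpow, ENNReal.toReal_ofReal hc]
  exact (Real.sqrt_eq_rpow c).symm


end StmtAux

open StmtAux ProbabilityTheory Real in
theorem stmt_6 (m₁ m₂ : ℝ) (σ₁ σ₂ : NNReal) :
    (W2 (ProbabilityTheory.gaussianReal m₁ (σ₁ ^ 2)) (ProbabilityTheory.gaussianReal m₂ (σ₂ ^ 2))) ^ 2
      = (m₁ - m₂) ^ 2 + ((σ₁ : ℝ) - (σ₂ : ℝ)) ^ 2 := by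
  set C : ℝ := (m₁ - m₂) ^ 2 + ((σ₁ : ℝ) - (σ₂ : ℝ)) ^ 2 with hCdef
  have hC0 : 0 ≤ C := by positivity
  suffices h : W2 (gaussianReal m₁ (σ₁ ^ 2)) (gaussianReal m₂ (σ₂ ^ 2)) = Real.sqrt C by
    rw [h, Real.sq_sqrt hC0]
  -- the optimal coupling
  set T : ℝ → ℝ × ℝ := fun x => ((σ₁:ℝ) * x + m₁, (σ₂:ℝ) * x + m₂) with hT_def
  have hT : Measurable T :=
    ((measurable_const_mul _).add_const _).prodMk ((measurable_const_mul _).add_const _)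
  set κ₀ : Measure (ℝ × ℝ) := (gaussianReal 0 1).map T with hk0
  haveI : IsProbabilityMeasure κ₀ := Measure.isProbabilityMeasure_map hT.aemeasurable
  have hfst : κ₀.map Prod.fst = gaussianReal m₁ (σ₁ ^ 2) := by
    rw [hk0, Measure.map_map measurable_fst hT]
    rw [gauss_map m₁ (σ₁^2), sqrt_coe_sq]
    rfl
  have hsnd : κ₀.map Prod.snd = gaussianReal m₂ (σ₂ ^ 2) := by
    rw [hk0, Measure.map_map measurable_snd hT]
    rw [gauss_map m₂ (σ₂^2), sqrt_coe_sq]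
    rfl
  have hcost : ∫⁻ p, ENNReal.ofReal (|p.1 - p.2| ^ 2) ∂κ₀ = ENNReal.ofReal C := by
    rw [lintegral_cost hfst hsnd]
    congr 1
    have : ∫ p, (p.1 - p.2)^2 ∂κ₀ = ∫ x, (((σ₁:ℝ)-σ₂)*x + (m₁-m₂))^2 ∂(gaussianReal 0 1) := by
      rw [hk0, integral_map hT.aemeasurable (f := fun p : ℝ × ℝ => (p.1 - p.2)^2)
        ((continuous_fst.sub continuous_snd).pow 2).aestronglyMeasurable]
      congr 1 with x
      simp only [hT_def, Function.comp]
      ring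
    rw [this, integral_affine_sq, hCdef]
    ring
  have hmem : Real.sqrt C ∈ {c : ℝ | ∃ κ : Measure (ℝ × ℝ), IsProbabilityMeasure κ ∧
      κ.map Prod.fst = gaussianReal m₁ (σ₁ ^ 2) ∧ κ.map Prod.snd = gaussianReal m₂ (σ₂ ^ 2) ∧
      c = ((∫⁻ p, ENNReal.ofReal (|p.1 - p.2| ^ 2) ∂κ) ^ (1/2 : ℝ)).toReal} := by
    refine ⟨κ₀, ‹IsProbabilityMeasure κ₀›, hfst, hsnd, ?_⟩
    rw [hcost, rpow_half_toReal hC0]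
  rw [W2]
  apply le_antisymm
  · refine csInf_le ⟨0, ?_⟩ hmem
    rintro c ⟨κ, hκ, hκ1, hκ2, rfl⟩
    exact ENNReal.toReal_nonneg
  · refine le_csInf ⟨_, hmem⟩ ?_
    rintro c ⟨κ, hκ, hκ1, hκ2, rfl⟩
    haveI := hκ
    rw [lintegral_cost hκ1 hκ2]
    have hle : ENNReal.ofReal C ≤ ENNReal.ofReal (∫ p, (p.1 - p.2)^2 ∂κ) :=
      ENNReal.ofReal_le_ofReal (int_cost hκ1 hκ2).2
    calc Real.sqrt C = ((ENNReal.ofReal C) ^ (1/2 : ℝ)).toReal := (rpow_half_toReal hC0).symm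
      _ ≤ _ := by
        apply ENNReal.toReal_mono
        · exact ENNReal.rpow_ne_top_of_nonneg (by norm_num) ENNReal.ofReal_ne_top
        · exact ENNReal.rpow_le_rpow hle (by norm_num)

end StmtAux
end

section
/- Let G₁, G₂:[0,1]²→ℝ be bounded measurable interaction functions with corresponding bounded solutions Q₁, Q₂ of Q_i(t,u) = 1 + ∫_t^T ∫_0^1 G_i(v,u) Q_i(s,v) dv ds. For each u ∈ [0,1] let ν_i(u) be the Gaussian law with mean (1/2)∫_0^T Q_i(t,u)² dt and variance ∫_0^T Q_i(t,u)² dt. Then there exists C > 0 (depending on T, ‖G₁‖_∞, ‖G₂‖_∞) such that for all u ∈ [0,1], W₂(ν₁(u), ν₂(u)) ≤ C (‖G₁ − G₂‖_∞^{1/2} + ‖G₁ − G₂‖_∞). -/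
open MeasureTheory intervalIntegral Set

section Aux

open Real ProbabilityTheory

noncomputable def gaussL : ℝ :=
  (∫⁻ x, ENNReal.ofReal (x ^ 2) ∂(ProbabilityTheory.gaussianReal 0 1)).toReal

lemma gaussL_nonneg : 0 ≤ gaussL := ENNReal.toReal_nonneg


lemma gauss_sq_integrable :
    Integrable (fun x : ℝ => gaussianPDFReal 0 1 x * x ^ 2) := by
  have h : Integrable (fun x : ℝ => (Real.sqrt (2 * π * 1))⁻¹ *
      (x ^ (2:ℝ) * Real.exp (-(1/2) * x ^ 2))) :=
    (integrable_rpow_mul_exp_neg_mul_sq (by norm_num) (by norm_num)).const_mul _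
  refine h.congr (Filter.Eventually.of_forall fun x => ?_)
  have hx : x ^ (2:ℝ) = x ^ (2:ℕ) := by
    rw [← Real.rpow_natCast x 2]; norm_num
  simp only [gaussianPDFReal_def, hx]
  push_cast
  rw [show -(x - 0) ^ 2 / (2 * 1) = -(1/2) * x ^ 2 by ring]
  ring

lemma gauss_sq_lintegral_ne_top :
    (∫⁻ x, ENNReal.ofReal (x ^ 2) ∂(gaussianReal 0 1)) ≠ ⊤ := by
  rw [gaussianReal_of_var_ne_zero _ one_ne_zero]
  rw [lintegral_withDensity_eq_lintegral_mul _ (measurable_gaussianPDF _ _)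
    (measurable_id'.pow_const 2).ennreal_ofReal]
  have : ∀ x : ℝ, (gaussianPDF 0 1 x * ENNReal.ofReal (x ^ 2)) =
      ENNReal.ofReal (gaussianPDFReal 0 1 x * x ^ 2) := by
    intro x
    rw [gaussianPDF_def, ← ENNReal.ofReal_mul (gaussianPDFReal_nonneg _ _ _)]
  simp only [Pi.mul_apply, this]
  rw [← ofReal_integral_eq_lintegral_ofReal gauss_sq_integrable
    (Filter.Eventually.of_forall fun x =>
      mul_nonneg (gaussianPDFReal_nonneg _ _ _) (sq_nonneg _))]
  exact ENNReal.ofReal_ne_top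

lemma map_affine_gaussian (s m : ℝ) (hs : 0 ≤ s) :
    (gaussianReal 0 1).map (fun x => Real.sqrt s * x + m)
      = gaussianReal m s.toNNReal := by
  have h1 : (fun x : ℝ => Real.sqrt s * x + m) = (· + m) ∘ (Real.sqrt s * ·) := rfl
  rw [h1, ← Measure.map_map (measurable_id'.add_const m) (measurable_const_mul _),
    gaussianReal_map_const_mul, gaussianReal_map_add_const]
  congr 1
  · simp
  · ext
    simp [Real.sq_sqrt hs, Real.coe_toNNReal s hs]

lemma W2_gaussian_le (m₁ m₂ s₁ s₂ : ℝ) (h₁ : 0 ≤ s₁) (h₂ : 0 ≤ s₂) :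
    W2 (gaussianReal m₁ s₁.toNNReal) (gaussianReal m₂ s₂.toNNReal)
      ≤ Real.sqrt (2 * gaussL + 2) * (|Real.sqrt s₁ - Real.sqrt s₂| + |m₁ - m₂|) := by
  set γ := gaussianReal 0 1 with hγ
  set a := Real.sqrt s₁ - Real.sqrt s₂ with ha
  set b := m₁ - m₂ with hb
  set f : ℝ → ℝ × ℝ := fun x => (Real.sqrt s₁ * x + m₁, Real.sqrt s₂ * x + m₂) with hf
  have hfm : Measurable f :=
    ((measurable_const_mul _).add_const _).prodMk ((measurable_const_mul _).add_const _)
  set κ : Measure (ℝ × ℝ) := γ.map f with hκ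
  have hκp : IsProbabilityMeasure κ := Measure.isProbabilityMeasure_map hfm.aemeasurable
  have hκ1 : κ.map Prod.fst = gaussianReal m₁ s₁.toNNReal := by
    rw [hκ, Measure.map_map measurable_fst hfm]
    exact map_affine_gaussian s₁ m₁ h₁
  have hκ2 : κ.map Prod.snd = gaussianReal m₂ s₂.toNNReal := by
    rw [hκ, Measure.map_map measurable_snd hfm]
    exact map_affine_gaussian s₂ m₂ h₂
  -- the cost
  set R : ℝ := 2 * a ^ 2 * gaussL + 2 * b ^ 2 with hR
  have hR0 : 0 ≤ R := by nlinarith [sq_nonneg a, sq_nonneg b, gaussL_nonneg]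
  have hcost : (∫⁻ p, ENNReal.ofReal (|p.1 - p.2| ^ 2) ∂κ) ≤ ENNReal.ofReal R := by
    rw [hκ, lintegral_map (f := fun p : ℝ × ℝ => ENNReal.ofReal (|p.1 - p.2| ^ 2)) (((measurable_fst.sub measurable_snd).abs.pow_const 2).ennreal_ofReal)
      hfm]
    have hpt : ∀ x : ℝ, ENNReal.ofReal (|(f x).1 - (f x).2| ^ 2)
        ≤ ENNReal.ofReal (2 * a ^ 2 * x ^ 2) + ENNReal.ofReal (2 * b ^ 2) := by
      intro x
      rw [← ENNReal.ofReal_add (by positivity) (by positivity)]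
      apply ENNReal.ofReal_le_ofReal
      rw [sq_abs]
      have : (f x).1 - (f x).2 = a * x + b := by simp [hf, ha, hb]; ring
      rw [this]
      nlinarith [sq_nonneg (a * x - b), sq_nonneg (a*x), sq_nonneg b]
    calc ∫⁻ x, ENNReal.ofReal (|(f x).1 - (f x).2| ^ 2) ∂γ
        ≤ ∫⁻ x, (ENNReal.ofReal (2 * a ^ 2 * x ^ 2) + ENNReal.ofReal (2 * b ^ 2)) ∂γ :=
          lintegral_mono hpt
      _ = (∫⁻ x, ENNReal.ofReal (2 * a ^ 2 * x ^ 2) ∂γ) + ENNReal.ofReal (2 * b ^ 2) := by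
          rw [lintegral_add_right _ measurable_const, lintegral_const, measure_univ, mul_one]
      _ ≤ ENNReal.ofReal R := by
          have : ∀ x : ℝ, ENNReal.ofReal (2 * a ^ 2 * x ^ 2)
              = ENNReal.ofReal (2 * a ^ 2) * ENNReal.ofReal (x ^ 2) := fun x =>
            ENNReal.ofReal_mul (by positivity)
          simp only [this]
          rw [lintegral_const_mul _ (measurable_id'.pow_const 2).ennreal_ofReal]
          have hL : (∫⁻ x, ENNReal.ofReal (x ^ 2) ∂γ) = ENNReal.ofReal gaussL :=
            (ENNReal.ofReal_toReal gauss_sq_lintegral_ne_top).symm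
          rw [hL, ← ENNReal.ofReal_mul (by positivity), hR,
            ← ENNReal.ofReal_add (by nlinarith [sq_nonneg a, gaussL_nonneg]) (by positivity)]
  -- the element of the set
  set e : ℝ := ((∫⁻ p, ENNReal.ofReal (|p.1 - p.2| ^ 2) ∂κ) ^ (1/2 : ℝ)).toReal with he
  have hmem : e ∈ {c : ℝ | ∃ κ : Measure (ℝ × ℝ), IsProbabilityMeasure κ ∧
      κ.map Prod.fst = gaussianReal m₁ s₁.toNNReal ∧
      κ.map Prod.snd = gaussianReal m₂ s₂.toNNReal ∧
      c = ((∫⁻ p, ENNReal.ofReal (|p.1 - p.2| ^ 2) ∂κ) ^ (1/2 : ℝ)).toReal} :=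
    ⟨κ, hκp, hκ1, hκ2, rfl⟩
  have hbdd : BddBelow {c : ℝ | ∃ κ : Measure (ℝ × ℝ), IsProbabilityMeasure κ ∧
      κ.map Prod.fst = gaussianReal m₁ s₁.toNNReal ∧
      κ.map Prod.snd = gaussianReal m₂ s₂.toNNReal ∧
      c = ((∫⁻ p, ENNReal.ofReal (|p.1 - p.2| ^ 2) ∂κ) ^ (1/2 : ℝ)).toReal} := by
    refine ⟨0, fun c hc => ?_⟩
    obtain ⟨κ', -, -, -, rfl⟩ := hc
    exact ENNReal.toReal_nonneg
  have hW : W2 (gaussianReal m₁ s₁.toNNReal) (gaussianReal m₂ s₂.toNNReal) ≤ e :=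
    csInf_le hbdd hmem
  refine hW.trans ?_
  have he2 : e ≤ Real.sqrt R := by
    rw [he]
    have h1 : ((∫⁻ p, ENNReal.ofReal (|p.1 - p.2| ^ 2) ∂κ) ^ (1/2 : ℝ))
        ≤ (ENNReal.ofReal R) ^ (1/2 : ℝ) :=
      ENNReal.rpow_le_rpow hcost (by norm_num)
    have h2 := ENNReal.toReal_mono
      (ENNReal.rpow_ne_top_of_nonneg (by norm_num) ENNReal.ofReal_ne_top) h1
    refine h2.trans_eq ?_
    rw [← ENNReal.toReal_rpow, ENNReal.toReal_ofReal hR0, ← Real.sqrt_eq_rpow]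
  refine he2.trans ?_
  have h3 : R ≤ (2 * gaussL + 2) * (a ^ 2 + b ^ 2) := by
    have := gaussL_nonneg
    nlinarith [sq_nonneg a, sq_nonneg b]
  calc Real.sqrt R ≤ Real.sqrt ((2 * gaussL + 2) * (a ^ 2 + b ^ 2)) :=
        Real.sqrt_le_sqrt h3
    _ = Real.sqrt (2 * gaussL + 2) * Real.sqrt (a ^ 2 + b ^ 2) := by
        rw [Real.sqrt_mul (by nlinarith [gaussL_nonneg])]
    _ ≤ Real.sqrt (2 * gaussL + 2) * (|a| + |b|) := by
        have h5 : a ^ 2 + b ^ 2 ≤ (|a| + |b|) ^ 2 := by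
          nlinarith [abs_nonneg a, abs_nonneg b, sq_abs a, sq_abs b,
            mul_nonneg (abs_nonneg a) (abs_nonneg b)]
        have h4 : Real.sqrt (a ^ 2 + b ^ 2) ≤ |a| + |b| := by
          have := Real.sqrt_le_sqrt h5
          rwa [Real.sqrt_sq (by positivity)] at this
        exact mul_le_mul_of_nonneg_left h4 (Real.sqrt_nonneg _)

end Aux

lemma abs_sqrt_sub_sqrt_le {a b : ℝ} (ha : 0 ≤ a) (hb : 0 ≤ b) :
    |Real.sqrt a - Real.sqrt b| ≤ Real.sqrt |a - b| := by
  wlog h : b ≤ a with H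
  · rw [abs_sub_comm, abs_sub_comm a b]; exact H hb ha (le_of_not_ge h)
  have hs := Real.sqrt_le_sqrt h
  rw [abs_of_nonneg (by linarith : (0:ℝ) ≤ Real.sqrt a - Real.sqrt b),
    abs_of_nonneg (by linarith : (0:ℝ) ≤ a - b)]
  have h2 : a ≤ (Real.sqrt (a - b) + Real.sqrt b) ^ 2 := by
    nlinarith [Real.sq_sqrt (sub_nonneg.mpr h), Real.sq_sqrt hb, Real.sqrt_nonneg (a - b),
      Real.sqrt_nonneg b, mul_nonneg (Real.sqrt_nonneg (a - b)) (Real.sqrt_nonneg b)]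
  have h3 : Real.sqrt a ≤ Real.sqrt (a - b) + Real.sqrt b := by
    have := Real.sqrt_le_sqrt h2
    rwa [Real.sqrt_sq (by positivity)] at this
  linarith

set_option maxHeartbeats 2000000 in
theorem stmt_7 (T : ℝ) (hT : 0 < T) (G₁ G₂ Q₁ Q₂ : ℝ → ℝ → ℝ)
    (hG₁m : Measurable (Function.uncurry G₁)) (hG₂m : Measurable (Function.uncurry G₂))
    (hG₁b : ∃ M, ∀ u v, |G₁ u v| ≤ M) (hG₂b : ∃ M, ∀ u v, |G₂ u v| ≤ M)
    (hQ₁m : ∀ t, Measurable (Q₁ t)) (hQ₂m : ∀ t, Measurable (Q₂ t))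
    (hQ₁b : ∃ M, ∀ t u, |Q₁ t u| ≤ M) (hQ₂b : ∃ M, ∀ t u, |Q₂ t u| ≤ M)
    (hQ₁c : ∀ u, Continuous fun t => Q₁ t u) (hQ₂c : ∀ u, Continuous fun t => Q₂ t u)
    (hQ₁eq : ∀ t ∈ Icc (0:ℝ) T, ∀ u ∈ Icc (0:ℝ) 1,
      Q₁ t u = 1 + ∫ s in t..T, ∫ v in (0:ℝ)..(1:ℝ), G₁ v u * Q₁ s v)
    (hQ₂eq : ∀ t ∈ Icc (0:ℝ) T, ∀ u ∈ Icc (0:ℝ) 1,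
      Q₂ t u = 1 + ∫ s in t..T, ∫ v in (0:ℝ)..(1:ℝ), G₂ v u * Q₂ s v)
    (ν₁ ν₂ : ℝ → Measure ℝ)
    (hν₁ : ∀ u, ν₁ u = ProbabilityTheory.gaussianReal
      ((1/2) * ∫ t in (0:ℝ)..T, (Q₁ t u) ^ 2) ((∫ t in (0:ℝ)..T, (Q₁ t u) ^ 2).toNNReal))
    (hν₂ : ∀ u, ν₂ u = ProbabilityTheory.gaussianReal
      ((1/2) * ∫ t in (0:ℝ)..T, (Q₂ t u) ^ 2) ((∫ t in (0:ℝ)..T, (Q₂ t u) ^ 2).toNNReal)) :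
    ∃ C > 0, ∀ δ ≥ (0:ℝ),
      (∀ u ∈ Icc (0:ℝ) 1, ∀ v ∈ Icc (0:ℝ) 1, |G₁ u v - G₂ u v| ≤ δ) →
      ∀ u ∈ Icc (0:ℝ) 1, W2 (ν₁ u) (ν₂ u) ≤ C * (Real.sqrt δ + δ) := by
  obtain ⟨MG₁, hMG₁⟩ := hG₁b
  obtain ⟨MG, hMG⟩ := hG₂b
  obtain ⟨M₁, hM₁⟩ := hQ₁b
  obtain ⟨M₂, hM₂⟩ := hQ₂b
  have hMG₁0 : 0 ≤ MG₁ := le_trans (abs_nonneg _) (hMG₁ 0 0)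
  have hMG0 : 0 ≤ MG := le_trans (abs_nonneg _) (hMG 0 0)
  have hM₁0 : 0 ≤ M₁ := le_trans (abs_nonneg _) (hM₁ 0 0)
  have hM₂0 : 0 ≤ M₂ := le_trans (abs_nonneg _) (hM₂ 0 0)
  set Cψ : ℝ := M₁ * T * Real.exp ((MG + 1) * T) with hCψ
  have hCψ0 : 0 ≤ Cψ := by positivity
  set K₀ : ℝ := M₁ * T + MG * Cψ with hK₀
  have hK₀0 : 0 ≤ K₀ := by positivity
  set K₁ : ℝ := K₀ * (M₁ + M₂) * T with hK₁
  have hK₁0 : 0 ≤ K₁ := by positivity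
  set C : ℝ := Real.sqrt (2 * gaussL + 2) * (Real.sqrt K₁ + K₁) + 1 with hC
  have hC0 : 0 < C := by positivity
  refine ⟨C, hC0, ?_⟩
  intro δ hδ0 hδG u hu
  have h01 : (0:ℝ) ≤ 1 := zero_le_one
  have hT0 : (0:ℝ) ≤ T := hT.le
  -- measurability in v
  have hG₁v : ∀ u, Measurable (fun v => G₁ v u) := fun u =>
    hG₁m.comp (measurable_id.prodMk measurable_const)
  have hG₂v : ∀ u, Measurable (fun v => G₂ v u) := fun u =>
    hG₂m.comp (measurable_id.prodMk measurable_const)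
  -- integrability helper on Ioc 0 1
  have hIocfin : (volume : Measure ℝ) (Ioc (0:ℝ) 1) < ⊤ := by
    simp [Real.volume_Ioc]
  have intIoc : ∀ (f : ℝ → ℝ) (M : ℝ), Measurable f → (∀ v, |f v| ≤ M) →
      IntegrableOn f (Ioc (0:ℝ) 1) := by
    intro f M hf hM
    exact Integrable.mono' (integrableOn_const (C := M) hIocfin.ne)
      hf.aestronglyMeasurable (Filter.Eventually.of_forall fun v => by simpa using hM v)
  -- the difference and its basic properties
  have hΔm : ∀ t, Measurable (fun v => Q₁ t v - Q₂ t v) := fun t => (hQ₁m t).sub (hQ₂m t)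
  have hΔb : ∀ t v, |Q₁ t v - Q₂ t v| ≤ M₁ + M₂ := fun t v =>
    (abs_sub _ _).trans (add_le_add (hM₁ t v) (hM₂ t v))
  have hΔc : ∀ v, Continuous fun t => Q₁ t v - Q₂ t v := fun v => (hQ₁c v).sub (hQ₂c v)
  set φ : ℝ → ℝ := fun t => ∫ v in Ioc (0:ℝ) 1, |Q₁ t v - Q₂ t v| with hφ
  have hφcont : Continuous φ := by
    refine continuous_of_dominated (bound := fun _ => M₁ + M₂)
      (fun t => (hΔm t).abs.aestronglyMeasurable)
      (fun t => Filter.Eventually.of_forall fun v => ?_)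
      (integrableOn_const hIocfin.ne)
      (Filter.Eventually.of_forall fun v => (hΔc v).abs)
    simpa using hΔb t v
  have hφ0 : ∀ t, 0 ≤ φ t := fun t => integral_nonneg fun v => abs_nonneg _
  -- inner integrals
  set B₁ : ℝ → ℝ → ℝ := fun u s => ∫ v in Ioc (0:ℝ) 1, G₁ v u * Q₁ s v with hB₁
  set B₂ : ℝ → ℝ → ℝ := fun u s => ∫ v in Ioc (0:ℝ) 1, G₂ v u * Q₂ s v with hB₂
  have hB₁c : ∀ u, Continuous (B₁ u) := by
    intro u
    refine continuous_of_dominated (bound := fun _ => MG₁ * M₁)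
      (fun s => ((hG₁v u).mul (hQ₁m s)).aestronglyMeasurable)
      (fun s => Filter.Eventually.of_forall fun v => ?_)
      (integrableOn_const hIocfin.ne)
      (Filter.Eventually.of_forall fun v => continuous_const.mul (hQ₁c v))
    simp only [Real.norm_eq_abs, abs_mul]
    exact mul_le_mul (hMG₁ v u) (hM₁ s v) (abs_nonneg _) hMG₁0
  have hB₂c : ∀ u, Continuous (B₂ u) := by
    intro u
    refine continuous_of_dominated (bound := fun _ => MG * M₂)
      (fun s => ((hG₂v u).mul (hQ₂m s)).aestronglyMeasurable)
      (fun s => Filter.Eventually.of_forall fun v => ?_)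
      (integrableOn_const hIocfin.ne)
      (Filter.Eventually.of_forall fun v => continuous_const.mul (hQ₂c v))
    simp only [Real.norm_eq_abs, abs_mul]
    exact mul_le_mul (hMG v u) (hM₂ s v) (abs_nonneg _) hMG0
  set g : ℝ → ℝ → ℝ := fun u s => B₁ u s - B₂ u s with hg
  have hgc : ∀ u, Continuous (g u) := fun u => (hB₁c u).sub (hB₂c u)
  -- pointwise bound on g
  have hgpt : ∀ u ∈ Icc (0:ℝ) 1, ∀ s : ℝ, |g u s| ≤ δ * M₁ + MG * φ s := by
    intro u hu s
    have hint1 : IntegrableOn (fun v => G₁ v u * Q₁ s v) (Ioc (0:ℝ) 1) :=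
      intIoc _ (MG₁ * M₁) ((hG₁v u).mul (hQ₁m s)) (fun v => by
        rw [abs_mul]; exact mul_le_mul (hMG₁ v u) (hM₁ s v) (abs_nonneg _) hMG₁0)
    have hint2 : IntegrableOn (fun v => G₂ v u * Q₂ s v) (Ioc (0:ℝ) 1) :=
      intIoc _ (MG * M₂) ((hG₂v u).mul (hQ₂m s)) (fun v => by
        rw [abs_mul]; exact mul_le_mul (hMG v u) (hM₂ s v) (abs_nonneg _) hMG0)
    have hgeq : g u s = ∫ v in Ioc (0:ℝ) 1, (G₁ v u * Q₁ s v - G₂ v u * Q₂ s v) :=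
      (integral_sub hint1 hint2).symm
    have habs : |g u s| ≤ ∫ v in Ioc (0:ℝ) 1, |G₁ v u * Q₁ s v - G₂ v u * Q₂ s v| := by
      rw [hgeq]
      simpa using norm_integral_le_integral_norm
        (fun v => G₁ v u * Q₁ s v - G₂ v u * Q₂ s v) (μ := volume.restrict (Ioc (0:ℝ) 1))
    refine habs.trans ?_
    have hintabs : IntegrableOn (fun v => |G₁ v u * Q₁ s v - G₂ v u * Q₂ s v|)
        (Ioc (0:ℝ) 1) := (hint1.sub hint2).abs
    have hintbd : IntegrableOn (fun v => δ * M₁ + MG * |Q₁ s v - Q₂ s v|) (Ioc (0:ℝ) 1) :=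
      (integrableOn_const hIocfin.ne).add
        (((intIoc _ (M₁ + M₂) (hΔm s).abs (fun v => by simpa using hΔb s v))).const_mul MG)
    have hmono := setIntegral_mono_on hintabs hintbd measurableSet_Ioc (fun v hv => by
      have hv1 : v ∈ Icc (0:ℝ) 1 := Ioc_subset_Icc_self hv
      have he : G₁ v u * Q₁ s v - G₂ v u * Q₂ s v
          = (G₁ v u - G₂ v u) * Q₁ s v + G₂ v u * (Q₁ s v - Q₂ s v) := by ring
      rw [he]
      refine (abs_add_le _ _).trans ?_
      rw [abs_mul, abs_mul]
      exact add_le_add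
        (mul_le_mul (hδG v hv1 u hu) (hM₁ s v) (abs_nonneg _) hδ0)
        (mul_le_mul (hMG v u) le_rfl (abs_nonneg _) hMG0))
    refine hmono.trans (le_of_eq ?_)
    rw [integral_add (integrableOn_const (C := δ * M₁) hIocfin.ne)
      (((intIoc _ (M₁ + M₂) (hΔm s).abs (fun v => by simpa using hΔb s v))).const_mul MG),
      MeasureTheory.integral_const_mul, setIntegral_const]
    simp [Real.volume_Ioc, MeasureTheory.integral_const_mul, hφ]
  -- the difference satisfies an integral identity
  have hΔeq : ∀ t ∈ Icc (0:ℝ) T, ∀ u' ∈ Icc (0:ℝ) 1,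
      Q₁ t u' - Q₂ t u' = ∫ s in t..T, g u' s := by
    intro t ht u' hu'
    rw [hQ₁eq t ht u' hu', hQ₂eq t ht u' hu']
    have e1 : ∀ s : ℝ, (∫ v in (0:ℝ)..(1:ℝ), G₁ v u' * Q₁ s v) = B₁ u' s := fun s =>
      intervalIntegral.integral_of_le h01
    have e2 : ∀ s : ℝ, (∫ v in (0:ℝ)..(1:ℝ), G₂ v u' * Q₂ s v) = B₂ u' s := fun s =>
      intervalIntegral.integral_of_le h01
    simp only [e1, e2]
    have h4 : (∫ s in t..T, g u' s)
        = (∫ s in t..T, B₁ u' s) - ∫ s in t..T, B₂ u' s :=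
      intervalIntegral.integral_sub ((hB₁c u').intervalIntegrable t T)
        ((hB₂c u').intervalIntegrable t T)
    rw [h4]; ring
  set ψ : ℝ → ℝ := fun t => ∫ s in t..T, φ s with hψ
  have hφInt : ∀ a b : ℝ, IntervalIntegrable φ volume a b := fun a b =>
    hφcont.intervalIntegrable a b
  have hψ0 : ∀ t, t ≤ T → 0 ≤ ψ t := fun t ht =>
    intervalIntegral.integral_nonneg ht (fun s _ => hφ0 s)
  -- key pointwise bound
  have hΔle : ∀ t ∈ Icc (0:ℝ) T, ∀ u' ∈ Icc (0:ℝ) 1,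
      |Q₁ t u' - Q₂ t u'| ≤ δ * M₁ * (T - t) + MG * ψ t := by
    intro t ht u' hu'
    rw [hΔeq t ht u' hu']
    have h1 : |∫ s in t..T, g u' s| ≤ ∫ s in t..T, |g u' s| :=
      intervalIntegral.abs_integral_le_integral_abs ht.2
    have h2 : (∫ s in t..T, |g u' s|) ≤ ∫ s in t..T, (δ * M₁ + MG * φ s) :=
      intervalIntegral.integral_mono_on ht.2 ((hgc u').abs.intervalIntegrable t T)
        ((continuous_const.add (continuous_const.mul hφcont)).intervalIntegrable t T)
        (fun s _ => hgpt u' hu' s)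
    have h3 : (∫ s in t..T, (δ * M₁ + MG * φ s)) = δ * M₁ * (T - t) + MG * ψ t := by
      rw [intervalIntegral.integral_add (g := fun s => MG * φ s) (intervalIntegrable_const)
        ((continuous_const.mul hφcont).intervalIntegrable t T),
        intervalIntegral.integral_const, intervalIntegral.integral_const_mul]
      simp [smul_eq_mul, hψ]
      ring
    linarith
  -- integrated bound
  have hφle : ∀ t ∈ Icc (0:ℝ) T, φ t ≤ δ * M₁ * (T - t) + MG * ψ t := by
    intro t ht
    have hmono := setIntegral_mono_on
      (intIoc _ (M₁ + M₂) (hΔm t).abs (fun v => by simpa using hΔb t v))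
      (integrableOn_const hIocfin.ne) measurableSet_Ioc
      (fun v hv => hΔle t ht v (Ioc_subset_Icc_self hv))
    refine le_trans hmono ?_
    rw [setIntegral_const]
    simp [Real.volume_Ioc]
  -- the primitive of φ
  set F : ℝ → ℝ := fun x => ∫ s in (0:ℝ)..x, φ s with hF
  have hFd : ∀ x : ℝ, HasDerivAt F (φ x) x := fun x =>
    (hφcont.integral_hasStrictDerivAt 0 x).hasDerivAt
  have hFc : Continuous F := by
    rw [continuous_iff_continuousAt]; exact fun x => (hFd x).continuousAt
  have hψF : ∀ t : ℝ, ψ t = F T - F t := by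
    intro t
    have := intervalIntegral.integral_add_adjacent_intervals (hφInt 0 t) (hφInt t T)
    simp only [hψ, hF]
    linarith
  set η : ℝ → ℝ := fun τ => F T - F (T - τ) with hηdef
  have hη : ∀ τ, η τ = ψ (T - τ) := fun τ => (hψF (T - τ)).symm
  have hη' : ∀ τ : ℝ, HasDerivAt η (φ (T - τ)) τ := by
    intro τ
    have h1 : HasDerivAt (fun τ : ℝ => T - τ) (-1) τ := (hasDerivAt_id τ).const_sub T
    have h2 : HasDerivAt (fun τ : ℝ => F (T - τ)) (φ (T - τ) * (-1)) τ :=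
      (hFd (T - τ)).comp τ h1
    have h3 := h2.const_sub (F T)
    simpa using h3
  -- Gronwall
  have hgron := norm_le_gronwallBound_of_norm_deriv_right_le (f := η)
    (f' := fun τ => φ (T - τ)) (δ := 0) (K := MG + 1) (ε := δ * M₁ * T) (a := 0) (b := T)
    ((continuous_const.sub (hFc.comp (continuous_const.sub continuous_id))).continuousOn)
    (fun x _ => (hη' x).hasDerivWithinAt)
    (by simp [hηdef])
    (by
      intro x hx
      have hTx : T - x ∈ Icc (0:ℝ) T := ⟨by linarith [hx.2], by linarith [hx.1]⟩
      have hb := hφle (T - x) hTx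
      have hψnn : 0 ≤ ψ (T - x) := hψ0 _ hTx.2
      rw [Real.norm_eq_abs, abs_of_nonneg (hφ0 _), Real.norm_eq_abs, hη,
        abs_of_nonneg hψnn]
      have hδM : 0 ≤ δ * M₁ := mul_nonneg hδ0 hM₁0
      have : δ * M₁ * (T - (T - x)) ≤ δ * M₁ * T := by
        apply mul_le_mul_of_nonneg_left _ hδM; linarith [hx.1, hx.2]
      linarith)
  -- extract the bound on ψ
  have hψle : ∀ t ∈ Icc (0:ℝ) T, ψ t ≤ δ * Cψ := by
    intro t ht
    have hx : T - t ∈ Icc (0:ℝ) T := ⟨by linarith [ht.2], by linarith [ht.1]⟩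
    have h := hgron (T - t) hx
    rw [Real.norm_eq_abs, hη, show T - (T - t) = t by ring, abs_of_nonneg (hψ0 t ht.2)] at h
    refine h.trans ?_
    have hKne : (MG + 1 : ℝ) ≠ 0 := by positivity
    rw [gronwallBound_of_K_ne_0 hKne]
    have hy : (0:ℝ) ≤ (MG + 1) * (T - t - 0) := by
      have : (0:ℝ) ≤ T - t - 0 := by linarith [ht.2]
      positivity
    have he1 : Real.exp ((MG + 1) * (T - t - 0)) - 1 ≤ Real.exp ((MG + 1) * T) := by
      have h5 : (MG + 1) * (T - t - 0) ≤ (MG + 1) * T := by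
        apply mul_le_mul_of_nonneg_left _ (by linarith)
        linarith [ht.1]
      have := Real.exp_le_exp.mpr h5
      linarith
    have he0 : (0:ℝ) ≤ Real.exp ((MG + 1) * (T - t - 0)) - 1 := by
      linarith [Real.add_one_le_exp ((MG + 1) * (T - t - 0)), hy]
    have hdiv : δ * M₁ * T / (MG + 1) ≤ δ * M₁ * T :=
      div_le_self (by positivity) (by linarith)
    have h6 := mul_le_mul hdiv he1 he0 (by positivity : (0:ℝ) ≤ δ * M₁ * T)
    rw [hCψ]
    nlinarith [Real.exp_pos ((MG + 1) * (T - t - 0))]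
  -- final pointwise bound on the difference
  have hΔfin : ∀ t ∈ Icc (0:ℝ) T, ∀ u' ∈ Icc (0:ℝ) 1,
      |Q₁ t u' - Q₂ t u'| ≤ δ * K₀ := by
    intro t ht u' hu'
    have h1 := hΔle t ht u' hu'
    have h2 := hψle t ht
    have hδM : 0 ≤ δ * M₁ := mul_nonneg hδ0 hM₁0
    have h3 : δ * M₁ * (T - t) ≤ δ * M₁ * T := by
      apply mul_le_mul_of_nonneg_left _ hδM; linarith [ht.1]
    have h4 : MG * ψ t ≤ MG * (δ * Cψ) := mul_le_mul_of_nonneg_left h2 hMG0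
    rw [hK₀]
    nlinarith
  -- step B : difference of second moments
  set I₁ : ℝ := ∫ t in (0:ℝ)..T, (Q₁ t u) ^ 2 with hI₁
  set I₂ : ℝ := ∫ t in (0:ℝ)..T, (Q₂ t u) ^ 2 with hI₂
  have hI₁0 : 0 ≤ I₁ := intervalIntegral.integral_nonneg hT0 (fun t _ => sq_nonneg _)
  have hI₂0 : 0 ≤ I₂ := intervalIntegral.integral_nonneg hT0 (fun t _ => sq_nonneg _)
  have hIdiff : |I₁ - I₂| ≤ δ * K₁ := by
    have h1 : I₁ - I₂ = ∫ t in (0:ℝ)..T, ((Q₁ t u) ^ 2 - (Q₂ t u) ^ 2) :=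
      (intervalIntegral.integral_sub (((hQ₁c u).pow 2).intervalIntegrable 0 T)
        (((hQ₂c u).pow 2).intervalIntegrable 0 T)).symm
    rw [h1]
    have h2 : |∫ t in (0:ℝ)..T, ((Q₁ t u) ^ 2 - (Q₂ t u) ^ 2)|
        ≤ ∫ t in (0:ℝ)..T, |(Q₁ t u) ^ 2 - (Q₂ t u) ^ 2| :=
      intervalIntegral.abs_integral_le_integral_abs hT0
    have h3 : (∫ t in (0:ℝ)..T, |(Q₁ t u) ^ 2 - (Q₂ t u) ^ 2|)
        ≤ ∫ t in (0:ℝ)..T, (δ * K₀ * (M₁ + M₂)) := by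
      refine intervalIntegral.integral_mono_on hT0
        ((((hQ₁c u).pow 2).sub ((hQ₂c u).pow 2)).abs.intervalIntegrable 0 T)
        intervalIntegrable_const (fun t ht => ?_)
      have he : (Q₁ t u) ^ 2 - (Q₂ t u) ^ 2 = (Q₁ t u - Q₂ t u) * (Q₁ t u + Q₂ t u) := by
        ring
      rw [he, abs_mul]
      have hsum : |Q₁ t u + Q₂ t u| ≤ M₁ + M₂ :=
        (abs_add_le _ _).trans (add_le_add (hM₁ t u) (hM₂ t u))
      exact mul_le_mul (hΔfin t ht u hu) hsum (abs_nonneg _)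
        (mul_nonneg hδ0 hK₀0)
    have h4 : (∫ t in (0:ℝ)..T, (δ * K₀ * (M₁ + M₂))) = δ * K₁ := by
      rw [intervalIntegral.integral_const, smul_eq_mul, hK₁]
      ring
    linarith
  -- step C : conclude via the gaussian coupling bound
  rw [hν₁ u, hν₂ u]
  refine (W2_gaussian_le _ _ I₁ I₂ hI₁0 hI₂0).trans ?_
  have hs1 : |Real.sqrt I₁ - Real.sqrt I₂| ≤ Real.sqrt K₁ * Real.sqrt δ := by
    refine (abs_sqrt_sub_sqrt_le hI₁0 hI₂0).trans ?_
    have := Real.sqrt_le_sqrt hIdiff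
    rw [Real.sqrt_mul hδ0 K₁] at this
    rw [mul_comm]
    exact this
  have hs2 : |1/2 * I₁ - 1/2 * I₂| ≤ δ * K₁ / 2 := by
    rw [show 1/2 * I₁ - 1/2 * I₂ = (I₁ - I₂) / 2 by ring, abs_div]
    simp only [abs_of_nonneg (by norm_num : (0:ℝ) ≤ 2)]
    linarith [hIdiff]
  have hS0 : 0 ≤ Real.sqrt (2 * gaussL + 2) := Real.sqrt_nonneg _
  have hsq0 : 0 ≤ Real.sqrt K₁ := Real.sqrt_nonneg _
  have hsd0 : 0 ≤ Real.sqrt δ := Real.sqrt_nonneg _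
  have h5 : Real.sqrt (2 * gaussL + 2) * (|Real.sqrt I₁ - Real.sqrt I₂| + |1/2 * I₁ - 1/2 * I₂|)
      ≤ Real.sqrt (2 * gaussL + 2) * (Real.sqrt K₁ * Real.sqrt δ + δ * K₁ / 2) := by
    apply mul_le_mul_of_nonneg_left _ hS0
    linarith
  refine h5.trans ?_
  rw [hC]
  nlinarith [mul_nonneg hS0 hsq0, mul_nonneg hS0 hK₁0, mul_nonneg (mul_nonneg hS0 hsq0) hδ0,
    mul_nonneg (mul_nonneg hS0 hK₁0) hsd0, mul_nonneg (mul_nonneg hS0 hK₁0) hδ0 ]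
end

section
/- Let G:[0,1]²→ℝ be bounded and Lipschitz continuous. For each N ∈ ℕ let Q^N = (Q^{1,N},…,Q^{N,N}) solve the ODE system d/dt Q^{i,N}(t) = −(1/N) Σ_{j=1}^N G(j/N, i/N) Q^{j,N}(t) with Q^{i,N}(T) = 1, and let Q:[0,T]×[0,1]→ℝ be the bounded solution of Q(t,u) = 1 + ∫_t^T ∫_0^1 G(v,u) Q(s,v) dv ds. Then there exists C > 0 independent of N such that max_{1≤i≤N} sup_{t∈[0,T]} |Q(t, i/N) − Q^{i,N}(t)| ≤ C/N. -/
open MeasureTheory intervalIntegral Set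
lemma aux_intInt {h : ℝ → ℝ} {M : ℝ} (hm : Measurable h) (hb : ∀ x, |h x| ≤ M)
    (a b : ℝ) : IntervalIntegrable h volume a b := by
  rw [intervalIntegrable_iff]
  exact Measure.integrableOn_of_bounded (M := M) measure_Ioc_lt_top.ne
    hm.aestronglyMeasurable (Filter.Eventually.of_forall fun x => by simpa using hb x)

lemma aux_riemann {h : ℝ → ℝ} {Λ M : ℝ} (hΛ : 0 ≤ Λ) (hm : Measurable h)
    (hb : ∀ x, |h x| ≤ M)
    (hlip : ∀ x ∈ Icc (0:ℝ) 1, ∀ y ∈ Icc (0:ℝ) 1, |h x - h y| ≤ Λ * |x - y|)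
    (N : ℕ) (hN : 0 < N) :
    |(∫ v in (0:ℝ)..1, h v) - (1/(N:ℝ)) * ∑ j : Fin N, h ((((j:ℕ):ℝ)+1)/(N:ℝ))| ≤ Λ / N := by
  have hNpos : (0:ℝ) < N := Nat.cast_pos.2 hN
  set a : ℕ → ℝ := fun k => (k:ℝ) / N with ha
  have hint : ∀ k, k < N → IntervalIntegrable h volume (a k) (a (k+1)) :=
    fun k _ => aux_intInt hm hb _ _
  have hsum := intervalIntegral.sum_integral_adjacent_intervals (μ := volume) (a := a)
    (n := N) hint
  have ha0 : a 0 = 0 := by simp [ha]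
  have haN : a N = 1 := by simp only [ha]; exact div_self hNpos.ne'
  rw [ha0, haN] at hsum
  -- rewrite the Fin sum as a range sum
  have hfin : (1/(N:ℝ)) * ∑ j : Fin N, h ((((j:ℕ):ℝ)+1)/(N:ℝ))
      = ∑ k ∈ Finset.range N, (1/(N:ℝ)) * h (a (k+1)) := by
    rw [Finset.mul_sum,
      Fin.sum_univ_eq_sum_range (fun k : ℕ => (1/(N:ℝ)) * h (((k:ℝ)+1)/(N:ℝ))) N]
    refine Finset.sum_congr rfl fun k _ => ?_
    simp only [ha]
    push_cast
    ring_nf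
  rw [hfin, ← hsum, ← Finset.sum_sub_distrib]
  refine le_trans (Finset.abs_sum_le_sum_abs _ _) ?_
  have key : ∀ k ∈ Finset.range N,
      |(∫ v in a k..a (k+1), h v) - (1/(N:ℝ)) * h (a (k+1))| ≤ Λ/N * (1/N) := by
    intro k hk
    have hkN : (k:ℝ) + 1 ≤ N := by
      have := Finset.mem_range.1 hk
      exact_mod_cast Nat.succ_le_of_lt this
    have hk0 : (0:ℝ) ≤ (k:ℝ) := Nat.cast_nonneg k
    have hle : a k ≤ a (k+1) := by
      simp only [ha]; gcongr; linarith
    have hconst : (1/(N:ℝ)) * h (a (k+1)) = ∫ _ in a k..a (k+1), h (a (k+1)) := by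
      rw [intervalIntegral.integral_const, smul_eq_mul]
      congr 1
      simp only [ha]
      push_cast
      ring
    rw [hconst, ← intervalIntegral.integral_sub (hint k (Finset.mem_range.1 hk))
      intervalIntegrable_const]
    have hbound : ∀ x ∈ uIoc (a k) (a (k+1)), ‖h x - h (a (k+1))‖ ≤ Λ/N := by
      intro x hx
      rw [uIoc_of_le hle] at hx
      have hak0 : (0:ℝ) ≤ a k := by simp only [ha]; positivity
      have hak1 : a (k+1) ≤ 1 := by
        simp only [ha, div_le_one hNpos]; push_cast; linarith
      have hx1 : x ∈ Icc (0:ℝ) 1 := ⟨by linarith [hx.1], le_trans hx.2 hak1⟩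
      have hx2 : a (k+1) ∈ Icc (0:ℝ) 1 := ⟨by simp only [ha]; positivity, hak1⟩
      rw [Real.norm_eq_abs]
      refine le_trans (hlip x hx1 _ hx2) ?_
      have h3 : a (k+1) - a k = 1/N := by simp only [ha]; push_cast; ring
      have hxa : |x - a (k+1)| ≤ 1/N := by
        have h1 : a k < x := hx.1
        have h2 : x ≤ a (k+1) := hx.2
        rw [abs_le]
        constructor <;> linarith
      calc Λ * |x - a (k+1)| ≤ Λ * (1/N) := mul_le_mul_of_nonneg_left hxa hΛ
        _ = Λ/N := by ring
    refine le_trans ((Real.norm_eq_abs _) ▸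
      intervalIntegral.norm_integral_le_of_norm_le_const hbound) ?_
    have h3 : a (k+1) - a k = 1/N := by simp only [ha]; push_cast; ring
    rw [h3, abs_of_nonneg (by positivity : (0:ℝ) ≤ 1/(N:ℝ))]
  refine le_trans (Finset.sum_le_sum key) ?_
  rw [Finset.sum_const, Finset.card_range, nsmul_eq_mul]
  have : (N:ℝ) * (Λ/N * (1/N)) = Λ/N := by field_simp
  rw [this]

theorem stmt_8 (T L : ℝ) (hT : 0 < T) (hL : 0 ≤ L) (G Q : ℝ → ℝ → ℝ)
    (hGb : ∃ M, ∀ u v, |G u v| ≤ M)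
    (hGlip : ∀ u₁ v₁ u₂ v₂ : ℝ, |G u₁ v₁ - G u₂ v₂| ≤ L * (|u₁ - u₂| + |v₁ - v₂|))
    (hQm : ∀ t, Measurable (Q t))
    (hQb : ∃ M, ∀ t u, |Q t u| ≤ M)
    (hQc : ∀ u, Continuous fun t => Q t u)
    (hQeq : ∀ t ∈ Icc (0:ℝ) T, ∀ u ∈ Icc (0:ℝ) 1,
      Q t u = 1 + ∫ s in t..T, ∫ v in (0:ℝ)..(1:ℝ), G v u * Q s v) :
    ∃ C > 0, ∀ N : ℕ, 0 < N → ∀ QN : Fin N → ℝ → ℝ,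
      (∀ i : Fin N, ∀ t ∈ Icc (0:ℝ) T,
        HasDerivAt (QN i)
          (-(1 / (N:ℝ)) * ∑ j : Fin N, G (((j:ℕ) + 1) / N) (((i:ℕ) + 1) / N) * QN j t) t) →
      (∀ i : Fin N, QN i T = 1) →
      ∀ i : Fin N, ∀ t ∈ Icc (0:ℝ) T,
        |Q t (((i:ℕ) + 1) / N) - QN i t| ≤ C / N := by
  obtain ⟨MG₀, hMG₀⟩ := hGb
  obtain ⟨MQ₀, hMQ₀⟩ := hQb
  set MG := max MG₀ 0 with hMGdef
  set MQ := max MQ₀ 0 with hMQdef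
  have hMG : ∀ u v, |G u v| ≤ MG := fun u v => (hMG₀ u v).trans (le_max_left _ _)
  have hMQ : ∀ t u, |Q t u| ≤ MQ := fun t u => (hMQ₀ t u).trans (le_max_left _ _)
  have hMGnn : 0 ≤ MG := le_max_right _ _
  have hMQnn : 0 ≤ MQ := le_max_right _ _
  -- continuity of G in its first variable
  have hGcont : ∀ u, Continuous fun v => G v u := by
    intro u
    refine (LipschitzWith.of_dist_le_mul (K := ⟨L, hL⟩) ?_).continuous
    intro x y
    rw [Real.dist_eq, Real.dist_eq]
    have := hGlip x u y u
    exact (by simpa using this : |G x u - G y u| ≤ L * |x - y|)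
  have hmeas : ∀ s u, Measurable fun v => G v u * Q s v :=
    fun s u => ((hGcont u).measurable).mul (hQm s)
  have hbnd : ∀ s u v, |G v u * Q s v| ≤ MG * MQ := by
    intro s u v
    rw [abs_mul]
    exact mul_le_mul (hMG _ _) (hMQ _ _) (abs_nonneg _) hMGnn
  set F : ℝ → ℝ → ℝ := fun u s => ∫ v in (0:ℝ)..1, G v u * Q s v with hFdef
  have hFint : ∀ u s, IntervalIntegrable (fun v => G v u * Q s v) volume 0 1 :=
    fun u s => aux_intInt (hmeas s u) (hbnd s u) 0 1
  have hFb : ∀ u s, |F u s| ≤ MG * MQ := by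
    intro u s
    have h := intervalIntegral.norm_integral_le_of_norm_le_const
      (C := MG * MQ) (f := fun v => G v u * Q s v) (a := (0:ℝ)) (b := 1)
      (fun x _ => by rw [Real.norm_eq_abs]; exact hbnd s u x)
    simpa [hFdef] using h
  have hFcont : ∀ u, Continuous fun s => F u s := by
    intro u
    simp only [hFdef]
    apply intervalIntegral.continuous_of_dominated_interval (bound := fun _ => MG * MQ)
    · exact fun s => ((hmeas s u).aestronglyMeasurable).restrict
    · exact fun s => Filter.Eventually.of_forall fun v _ => by
        rw [Real.norm_eq_abs]; exact hbnd s u v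
    · exact intervalIntegrable_const
    · exact Filter.Eventually.of_forall fun v _ => continuous_const.mul (hQc v)
  -- Q is Lipschitz in the space variable
  have hQlip : ∀ s ∈ Icc (0:ℝ) T, ∀ x ∈ Icc (0:ℝ) 1, ∀ y ∈ Icc (0:ℝ) 1,
      |Q s x - Q s y| ≤ (L * MQ * T) * |x - y| := by
    intro s hs x hx y hy
    have hFi : ∀ u : ℝ, IntervalIntegrable (F u) volume s T :=
      fun u => (hFcont u).intervalIntegrable s T
    have hrepr : Q s x - Q s y = ∫ σ in s..T, (F x σ - F y σ) := by
      rw [hQeq s hs x hx, hQeq s hs y hy, intervalIntegral.integral_sub (hFi x) (hFi y)]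
      simp only [hFdef]
      ring
    rw [hrepr]
    have hb : ∀ σ ∈ uIoc s T, ‖F x σ - F y σ‖ ≤ (L * MQ) * |x - y| := by
      intro σ _
      have hsub : F x σ - F y σ = ∫ v in (0:ℝ)..1, (G v x * Q σ v - G v y * Q σ v) := by
        rw [intervalIntegral.integral_sub (hFint x σ) (hFint y σ)]
      rw [Real.norm_eq_abs, hsub]
      have h := intervalIntegral.norm_integral_le_of_norm_le_const
        (C := (L * MQ) * |x - y|) (a := (0:ℝ)) (b := 1)
        (f := fun v => G v x * Q σ v - G v y * Q σ v) ?_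
      · simpa using h
      · intro v _
        rw [Real.norm_eq_abs]
        show |G v x * Q σ v - G v y * Q σ v| ≤ (L * MQ) * |x - y|
        have heq : G v x * Q σ v - G v y * Q σ v = (G v x - G v y) * Q σ v := by ring
        rw [heq, abs_mul]
        have h3 : |G v x - G v y| ≤ L * |x - y| := by
          have := hGlip v x v y
          simpa using this
        calc |G v x - G v y| * |Q σ v| ≤ (L * |x - y|) * MQ :=
              mul_le_mul h3 (hMQ _ _) (abs_nonneg _) (mul_nonneg hL (abs_nonneg _))
          _ = (L * MQ) * |x - y| := by ring
    calc |∫ σ in s..T, (F x σ - F y σ)|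
        ≤ ((L * MQ) * |x - y|) * |T - s| := by
          have := intervalIntegral.norm_integral_le_of_norm_le_const hb
          simpa using this
      _ ≤ ((L * MQ) * |x - y|) * T := by
          have h1 : |T - s| ≤ T := by
            rw [abs_of_nonneg (by linarith [hs.2])]
            linarith [hs.1]
          exact mul_le_mul_of_nonneg_left h1 (by positivity)
      _ = (L * MQ * T) * |x - y| := by ring
  -- the constants
  set Λ := L * MQ + MG * (L * MQ * T) with hΛdef
  have hΛ : 0 ≤ Λ := by positivity
  set K : ℝ := MG + 1 with hKdef
  have hK1 : 1 ≤ K := by linarith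
  have hKpos : 0 < K := by linarith
  have hCpos : 0 < Λ * Real.exp (K * T) + 1 := by
    nlinarith [mul_nonneg hΛ (Real.exp_pos (K * T)).le]
  refine ⟨Λ * Real.exp (K * T) + 1, hCpos, ?_⟩
  intro N hN QN hode hterm
  have hNpos : (0:ℝ) < N := Nat.cast_pos.2 hN
  set u : Fin N → ℝ := fun i => (((i:ℕ):ℝ) + 1) / N with hudef
  have hu : ∀ i, u i ∈ Icc (0:ℝ) 1 := by
    intro i
    constructor
    · simp only [hudef]; positivity
    · simp only [hudef, div_le_one hNpos]
      have : (i:ℕ) < N := i.isLt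
      exact_mod_cast Nat.succ_le_of_lt this
  have hQNc : ∀ j, ContinuousOn (QN j) (Icc 0 T) :=
    fun j t ht => ((hode j t ht).continuousAt).continuousWithinAt
  -- continuous extension of QN
  set R : Fin N → ℝ → ℝ := fun j s => QN j ((projIcc 0 T hT.le s : Icc (0:ℝ) T) : ℝ) with hRdef
  have hRc : ∀ j, Continuous (R j) := by
    intro j
    exact (hQNc j).comp_continuous
      (continuous_subtype_val.comp continuous_projIcc)
      (fun s => (projIcc 0 T hT.le s).2)
  have hReq : ∀ j, ∀ s ∈ Icc (0:ℝ) T, R j s = QN j s := by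
    intro j s hs
    simp only [hRdef, projIcc_of_mem hT.le hs]
  set S : Fin N → ℝ → ℝ := fun i s => (1/(N:ℝ)) * ∑ j, G (u j) (u i) * QN j s with hSdef
  set Sc : Fin N → ℝ → ℝ := fun i s => (1/(N:ℝ)) * ∑ j, G (u j) (u i) * R j s with hScdef
  have hScc : ∀ i, Continuous (Sc i) := by
    intro i
    exact continuous_const.mul (continuous_finset_sum _ fun j _ => continuous_const.mul (hRc j))
  have hSceq : ∀ i, ∀ s ∈ Icc (0:ℝ) T, Sc i s = S i s := by
    intro i s hs
    simp only [hScdef, hSdef]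
    congr 1
    exact Finset.sum_congr rfl fun j _ => by rw [hReq j s hs]
  set ψ : Fin N → ℝ → ℝ := fun i s => F (u i) s - Sc i s with hψdef
  have hψc : ∀ i, Continuous (ψ i) := fun i => (hFcont (u i)).sub (hScc i)
  set Φ : Fin N → ℝ → ℝ := fun i a => ∫ s in a..T, ψ i s with hΦdef
  have hΦd : ∀ i a, HasDerivAt (Φ i) (-(ψ i a)) a := by
    intro i a
    exact intervalIntegral.integral_hasDerivAt_left ((hψc i).intervalIntegrable a T)
      ⟨univ, Filter.univ_mem, ((hψc i).aestronglyMeasurable).restrict⟩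
      (hψc i).continuousAt
  set w : ℝ → Fin N → ℝ := fun τ i => Φ i (T - τ) with hwdef
  have hwc : Continuous w := by
    refine continuous_pi fun i => ?_
    have hΦc : Continuous (Φ i) :=
      continuous_iff_continuousAt.mpr fun a => (hΦd i a).continuousAt
    exact hΦc.comp (continuous_const.sub continuous_id)
  have hwd : ∀ τ : ℝ, HasDerivAt w (fun i => ψ i (T - τ)) τ := by
    intro τ
    rw [hasDerivAt_pi]
    intro i
    have h1 : HasDerivAt (fun τ : ℝ => T - τ) (-1) τ := (hasDerivAt_id τ).const_sub T
    have h2 := (hΦd i (T - τ)).comp τ h1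
    convert h2 using 1
    · rfl
    · rfl
    · ring
  -- integral representation of QN
  have keyQN : ∀ i, ∀ t ∈ Icc (0:ℝ) T, QN i t = 1 + ∫ s in t..T, S i s := by
    intro i t ht
    have hSi : IntervalIntegrable (S i) volume t T := by
      apply ContinuousOn.intervalIntegrable
      have hss : uIcc t T ⊆ Icc 0 T := by
        rw [uIcc_of_le ht.2]
        exact Icc_subset_Icc ht.1 le_rfl
      refine ContinuousOn.mono ?_ hss
      simp only [hSdef]
      exact continuousOn_const.mul (continuousOn_finset_sum _ fun j _ =>
        continuousOn_const.mul (hQNc j))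
    have hderiv : ∀ x ∈ uIcc t T, HasDerivAt (QN i) (-(S i x)) x := by
      intro x hx
      rw [uIcc_of_le ht.2] at hx
      have hx' : x ∈ Icc 0 T := ⟨le_trans ht.1 hx.1, hx.2⟩
      have h := hode i x hx'
      have heq : -(1 / (N:ℝ)) * ∑ j : Fin N,
          G (((j:ℕ) + 1) / N) (((i:ℕ) + 1) / N) * QN j x = -(S i x) := by
        simp only [hSdef, hudef]
        ring
      rwa [heq] at h
    have hFTC := intervalIntegral.integral_eq_sub_of_hasDerivAt hderiv hSi.neg
    rw [intervalIntegral.integral_neg, hterm i] at hFTC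
    linarith [hFTC]
  -- integral representation of the error
  have key : ∀ i, ∀ t ∈ Icc (0:ℝ) T, Q t (u i) - QN i t = Φ i t := by
    intro i t ht
    have hQt : Q t (u i) = 1 + ∫ s in t..T, F (u i) s := by
      simp only [hFdef]
      exact hQeq t ht (u i) (hu i)
    have hΦeq : Φ i t = (∫ s in t..T, F (u i) s) - ∫ s in t..T, S i s := by
      simp only [hΦdef, hψdef]
      rw [intervalIntegral.integral_sub ((hFcont (u i)).intervalIntegrable t T)
        ((hScc i).intervalIntegrable t T)]
      congr 1
      apply intervalIntegral.integral_congr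
      intro s hs
      rw [uIcc_of_le ht.2] at hs
      exact hSceq i s ⟨le_trans ht.1 hs.1, hs.2⟩
    rw [hQt, keyQN i t ht, hΦeq]
    ring
  have keyw : ∀ i, ∀ t ∈ Icc (0:ℝ) T, Q t (u i) - QN i t = w (T - t) i := by
    intro i t ht
    rw [key i t ht]
    simp only [hwdef, sub_sub_cancel]
  -- Gronwall
  have hw0 : ‖w 0‖ ≤ 0 := by
    have : w 0 = 0 := by
      funext i
      simp only [hwdef, sub_zero, hΦdef, intervalIntegral.integral_same]
      rfl
    rw [this, norm_zero]
  have hbound : ∀ τ ∈ Ico (0:ℝ) T, ‖(fun i => ψ i (T - τ))‖ ≤ K * ‖w τ‖ + Λ / N := by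
    intro τ hτ
    have hs : T - τ ∈ Icc (0:ℝ) T := ⟨by linarith [hτ.2], by linarith [hτ.1]⟩
    have hrhs : 0 ≤ K * ‖w τ‖ + Λ / N :=
      add_nonneg (mul_nonneg (by linarith) (norm_nonneg _)) (div_nonneg hΛ hNpos.le)
    rw [pi_norm_le_iff_of_nonneg hrhs]
    intro i
    rw [Real.norm_eq_abs]
    set s := T - τ with hs'
    -- Riemann sum error
    have hrs : |F (u i) s - (1/(N:ℝ)) * ∑ j, G (u j) (u i) * Q s (u j)| ≤ Λ / N := by
      have hlip2 : ∀ x ∈ Icc (0:ℝ) 1, ∀ y ∈ Icc (0:ℝ) 1,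
          |G x (u i) * Q s x - G y (u i) * Q s y| ≤ Λ * |x - y| := by
        intro x hx y hy
        have hdec : G x (u i) * Q s x - G y (u i) * Q s y
            = (G x (u i) - G y (u i)) * Q s x + G y (u i) * (Q s x - Q s y) := by ring
        rw [hdec]
        refine le_trans (abs_add_le _ _) ?_
        rw [abs_mul, abs_mul]
        have h1 : |G x (u i) - G y (u i)| ≤ L * |x - y| := by
          have := hGlip x (u i) y (u i); simpa using this
        have h2 : |G y (u i)| * |Q s x - Q s y| ≤ MG * ((L * MQ * T) * |x - y|) :=
          mul_le_mul (hMG _ _) (hQlip s hs x hx y hy) (abs_nonneg _) hMGnn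
        have h3 : |G x (u i) - G y (u i)| * |Q s x| ≤ (L * |x - y|) * MQ :=
          mul_le_mul h1 (hMQ _ _) (abs_nonneg _) (mul_nonneg hL (abs_nonneg _))
        calc |G x (u i) - G y (u i)| * |Q s x| + |G y (u i)| * |Q s x - Q s y|
            ≤ (L * |x - y|) * MQ + MG * ((L * MQ * T) * |x - y|) := add_le_add h3 h2
          _ = Λ * |x - y| := by rw [hΛdef]; ring
      have := aux_riemann (h := fun v => G v (u i) * Q s v) hΛ (hmeas s (u i))
        (hbnd s (u i)) hlip2 N hN
      simpa only [hFdef, hudef] using this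
    -- coupling error
    have hcp : |(1/(N:ℝ)) * ∑ j, G (u j) (u i) * Q s (u j) - S i s| ≤ MG * ‖w τ‖ := by
      have hdiff : (1/(N:ℝ)) * ∑ j, G (u j) (u i) * Q s (u j) - S i s
          = (1/(N:ℝ)) * ∑ j, G (u j) (u i) * (Q s (u j) - QN j s) := by
        simp only [hSdef]
        rw [← mul_sub, ← Finset.sum_sub_distrib]
        congr 1
        exact Finset.sum_congr rfl fun j _ => by ring
      rw [hdiff, abs_mul, abs_of_nonneg (by positivity : (0:ℝ) ≤ 1/(N:ℝ))]
      have hterm2 : ∀ j : Fin N, |G (u j) (u i) * (Q s (u j) - QN j s)| ≤ MG * ‖w τ‖ := by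
        intro j
        rw [abs_mul]
        have h1 : |Q s (u j) - QN j s| ≤ ‖w τ‖ := by
          have := keyw j s hs
          rw [this, hs']
          have h2 : T - (T - τ) = τ := by ring
          rw [h2]
          exact (Real.norm_eq_abs _) ▸ norm_le_pi_norm (w τ) j
        exact mul_le_mul (hMG _ _) h1 (abs_nonneg _) hMGnn
      calc (1/(N:ℝ)) * |∑ j, G (u j) (u i) * (Q s (u j) - QN j s)|
          ≤ (1/(N:ℝ)) * ∑ j, |G (u j) (u i) * (Q s (u j) - QN j s)| := by
            exact mul_le_mul_of_nonneg_left (Finset.abs_sum_le_sum_abs _ _) (by positivity)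
        _ ≤ (1/(N:ℝ)) * ∑ _j : Fin N, MG * ‖w τ‖ := by
            exact mul_le_mul_of_nonneg_left
              (Finset.sum_le_sum fun j _ => hterm2 j) (by positivity)
        _ = MG * ‖w τ‖ := by
            rw [Finset.sum_const, Finset.card_univ, Fintype.card_fin, nsmul_eq_mul]
            field_simp
    have hsplit : ψ i s = (F (u i) s - (1/(N:ℝ)) * ∑ j, G (u j) (u i) * Q s (u j))
        + ((1/(N:ℝ)) * ∑ j, G (u j) (u i) * Q s (u j) - S i s) := by
      simp only [hψdef]
      rw [hSceq i s hs]
      ring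
    calc |ψ i s| ≤ |F (u i) s - (1/(N:ℝ)) * ∑ j, G (u j) (u i) * Q s (u j)|
          + |(1/(N:ℝ)) * ∑ j, G (u j) (u i) * Q s (u j) - S i s| := by
          rw [hsplit]; exact abs_add_le _ _
      _ ≤ Λ / N + MG * ‖w τ‖ := add_le_add hrs hcp
      _ ≤ K * ‖w τ‖ + Λ / N := by
          rw [hKdef]
          nlinarith [norm_nonneg (w τ)]
  have hgr := norm_le_gronwallBound_of_norm_deriv_right_le (f := w)
    (f' := fun τ i => ψ i (T - τ)) (δ := 0) (K := K) (ε := Λ / N) (a := 0) (b := T)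
    hwc.continuousOn (fun τ _ => (hwd τ).hasDerivWithinAt) hw0 hbound
  -- bound the Gronwall bound
  have hgb : ∀ x ∈ Icc (0:ℝ) T, gronwallBound 0 K (Λ / N) (x - 0)
      ≤ (Λ * Real.exp (K * T) + 1) / N := by
    intro x hx
    rw [sub_zero, gronwallBound_of_K_ne_0 (by linarith : K ≠ 0)]
    simp only [zero_mul, zero_add]
    have he1 : Real.exp (K * x) - 1 ≤ Real.exp (K * T) := by
      have : Real.exp (K * x) ≤ Real.exp (K * T) :=
        Real.exp_le_exp.2 (mul_le_mul_of_nonneg_left hx.2 hKpos.le)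
      linarith
    have he0 : 0 ≤ Real.exp (K * x) - 1 := by
      have : (1:ℝ) ≤ Real.exp (K * x) := by
        rw [← Real.exp_zero]
        exact Real.exp_le_exp.2 (mul_nonneg hKpos.le hx.1)
      linarith
    have hd : Λ / N / K ≤ Λ / N :=
      div_le_self (div_nonneg hΛ hNpos.le) hK1
    calc Λ / N / K * (Real.exp (K * x) - 1) ≤ Λ / N * Real.exp (K * T) :=
          mul_le_mul hd he1 he0 (div_nonneg hΛ hNpos.le)
      _ = Λ * Real.exp (K * T) / N := by ring
      _ ≤ (Λ * Real.exp (K * T) + 1) / N := by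
          gcongr
          linarith
  -- conclusion
  intro i t ht
  have hui : u i = (((i:ℕ):ℝ) + 1) / N := by simp only [hudef]
  have h1 := keyw i t ht
  have hτ : T - t ∈ Icc (0:ℝ) T := ⟨by linarith [ht.2], by linarith [ht.1]⟩
  calc |Q t ((((i:ℕ):ℝ) + 1) / N) - QN i t| = |w (T - t) i| := by
        rw [← hui, h1]
    _ ≤ ‖w (T - t)‖ := (Real.norm_eq_abs _) ▸ norm_le_pi_norm (w (T - t)) i
    _ ≤ gronwallBound 0 K (Λ / N) (T - t - 0) := hgr (T - t) hτ
    _ ≤ (Λ * Real.exp (K * T) + 1) / N := hgb (T - t) hτ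
end

section
/- Let G:[0,1]²→ℝ be bounded, measurable, nonnegative, with g_min := inf_{u,v} G(u,v) and g_max := sup_{u,v} G(u,v). Let Q solve Q(t,u) = 1 + ∫_t^T ∫_0^1 G(v,u) Q(s,v) dv ds. Then e^{g_min (T−t)} ≤ Q(t,u) ≤ e^{g_max (T−t)} for all (t,u) ∈ [0,T]×[0,1]. -/
open MeasureTheory intervalIntegral Set

private lemma integral_T_sub_pow (t T : ℝ) (n : ℕ) :
    (∫ s in t..T, (T - s) ^ n) = (T - t) ^ (n + 1) / (n + 1) := by
  rw [intervalIntegral.integral_comp_sub_left (fun x => x ^ n) T]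
  simp [integral_pow]

private lemma exp_integral (g t T : ℝ) :
    (∫ s in t..T, g * Real.exp (g * (T - s))) = Real.exp (g * (T - t)) - 1 := by
  have h : ∀ s ∈ uIcc t T, HasDerivAt (fun s => -Real.exp (g * (T - s)))
      (g * Real.exp (g * (T - s))) s := by
    intro s _
    have h1 : HasDerivAt (fun s : ℝ => g * (T - s)) (g * (-1)) s :=
      ((hasDerivAt_id s).const_sub T).const_mul g
    have h2 := ((Real.hasDerivAt_exp (g * (T - s))).comp s h1).neg
    refine h2.congr_deriv ?_
    ring
  rw [intervalIntegral.integral_eq_sub_of_hasDerivAt h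
    (Continuous.intervalIntegrable (by continuity) t T)]
  simp only [sub_self, mul_zero, Real.exp_zero]
  ring

private lemma iter_lemma (T K M' : ℝ) (hK : 0 ≤ K) (hM' : 0 ≤ M')
    (D : ℝ → ℝ → ℝ)
    (hbase : ∀ t ∈ Icc (0:ℝ) T, ∀ u ∈ Icc (0:ℝ) 1, D t u ≤ M')
    (hstep : ∀ t ∈ Icc (0:ℝ) T, ∀ u ∈ Icc (0:ℝ) 1, ∀ c : ℝ → ℝ, Continuous c →
      (∀ s ∈ Icc t T, 0 ≤ c s) → (∀ s ∈ Icc t T, ∀ v ∈ Icc (0:ℝ) 1, D s v ≤ c s) →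
      D t u ≤ K * ∫ s in t..T, c s) :
    ∀ t ∈ Icc (0:ℝ) T, ∀ u ∈ Icc (0:ℝ) 1, D t u ≤ 0 := by
  have key : ∀ n : ℕ, ∀ t ∈ Icc (0:ℝ) T, ∀ u ∈ Icc (0:ℝ) 1,
      D t u ≤ M' * (K * (T - t)) ^ n / n.factorial := by
    intro n
    induction n with
    | zero => simpa using hbase
    | succ n ih =>
      intro t ht u hu
      have hTt : 0 ≤ T - t := by linarith [ht.2]
      have hc : Continuous fun s : ℝ => M' * (K * (T - s)) ^ n / n.factorial :=
        (continuous_const.mul ((continuous_const.mul (continuous_const.sub continuous_id)).pow n)).div_const _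
      have hnn : ∀ s ∈ Icc t T, 0 ≤ M' * (K * (T - s)) ^ n / n.factorial := by
        intro s hs
        have h1 : 0 ≤ T - s := by linarith [hs.2]
        have h2 : 0 ≤ K * (T - s) := mul_nonneg hK h1
        positivity
      have hle : ∀ s ∈ Icc t T, ∀ v ∈ Icc (0:ℝ) 1,
          D s v ≤ M' * (K * (T - s)) ^ n / n.factorial := fun s hs v hv =>
        ih s ⟨le_trans ht.1 hs.1, hs.2⟩ v hv
      refine (hstep t ht u hu _ hc hnn hle).trans ?_
      have hint : (∫ s in t..T, M' * (K * (T - s)) ^ n / n.factorial)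
          = (M' * K ^ n / n.factorial) * ((T - t) ^ (n + 1) / (n + 1)) := by
        have heq : (fun s => M' * (K * (T - s)) ^ n / n.factorial)
            = fun s => (M' * K ^ n / n.factorial) * (T - s) ^ n := by
          funext s; rw [mul_pow]; ring
        rw [heq, intervalIntegral.integral_const_mul, integral_T_sub_pow]
      rw [hint]
      apply le_of_eq
      have h1 : (n.factorial : ℝ) ≠ 0 := Nat.cast_ne_zero.2 n.factorial_ne_zero
      have h2 : ((n : ℝ) + 1) ≠ 0 := by positivity
      rw [Nat.factorial_succ, mul_pow]
      push_cast
      field_simp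
      ring
  intro t ht u hu
  have htend : Filter.Tendsto (fun n : ℕ => M' * (K * (T - t)) ^ n / n.factorial)
      Filter.atTop (nhds 0) := by
    have h1 := (FloorSemiring.tendsto_pow_div_factorial_atTop (K * (T - t))).const_mul M'
    simpa [mul_div_assoc] using h1
  exact ge_of_tendsto htend (Filter.Eventually.of_forall fun n => key n t ht u hu)
theorem stmt_18 (T gmin gmax : ℝ) (hT : 0 < T) (hgmin : 0 ≤ gmin)
    (G Q : ℝ → ℝ → ℝ)
    (hGm : Measurable (Function.uncurry G))
    (hGbounds : ∀ u ∈ Icc (0:ℝ) 1, ∀ v ∈ Icc (0:ℝ) 1, gmin ≤ G u v ∧ G u v ≤ gmax)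
    (hQm : ∀ t, Measurable (Q t))
    (hQb : ∃ M, ∀ t u, |Q t u| ≤ M)
    (hQc : ∀ u, Continuous fun t => Q t u)
    (hQeq : ∀ t ∈ Icc (0:ℝ) T, ∀ u ∈ Icc (0:ℝ) 1,
      Q t u = 1 + ∫ s in t..T, ∫ v in (0:ℝ)..(1:ℝ), G v u * Q s v) :
    ∀ t ∈ Icc (0:ℝ) T, ∀ u ∈ Icc (0:ℝ) 1,
      Real.exp (gmin * (T - t)) ≤ Q t u ∧ Q t u ≤ Real.exp (gmax * (T - t)) := by
  obtain ⟨M, hM⟩ := hQb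
  have hM0 : 0 ≤ M := le_trans (abs_nonneg _) (hM 0 0)
  have h01 : (0:ℝ) ∈ Icc (0:ℝ) 1 := ⟨le_refl _, zero_le_one⟩
  have hgmax0 : 0 ≤ gmax :=
    le_trans hgmin (le_trans (hGbounds 0 h01 0 h01).1 (hGbounds 0 h01 0 h01).2)
  -- measurability of the inner integrand
  have hmeas : ∀ s u, AEStronglyMeasurable (fun v => G v u * Q s v)
      (volume.restrict (Set.uIoc (0:ℝ) 1)) := by
    intro s u
    exact ((hGm.comp (measurable_id.prodMk measurable_const)).mul (hQm s)).aestronglyMeasurable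
  have hbound : ∀ s, ∀ u ∈ Icc (0:ℝ) 1, ∀ᵐ v ∂(volume : Measure ℝ),
      v ∈ Set.uIoc (0:ℝ) 1 → ‖G v u * Q s v‖ ≤ gmax * M := by
    intro s u hu
    refine Filter.Eventually.of_forall fun v hv => ?_
    have hv' : v ∈ Icc (0:ℝ) 1 := by
      rw [uIoc_of_le zero_le_one] at hv; exact Ioc_subset_Icc_self hv
    have hG := hGbounds v hv' u hu
    have hG0 : 0 ≤ G v u := le_trans hgmin hG.1
    rw [Real.norm_eq_abs, abs_mul, abs_of_nonneg hG0]
    exact mul_le_mul hG.2 (hM s v) (abs_nonneg _) hgmax0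
  have hintg : ∀ s, ∀ u ∈ Icc (0:ℝ) 1,
      IntervalIntegrable (fun v => G v u * Q s v) volume 0 1 := by
    intro s u hu
    rw [intervalIntegrable_iff]
    refine Integrable.mono' (g := fun _ => gmax * M)
      (integrableOn_const ?_) (hmeas s u) ?_
    · rw [uIoc_of_le zero_le_one]; exact measure_Ioc_lt_top.ne
    · exact (ae_restrict_iff' measurableSet_uIoc).2 (hbound s u hu)
  have hFcont : ∀ u ∈ Icc (0:ℝ) 1,
      Continuous fun s => ∫ v in (0:ℝ)..1, G v u * Q s v := by
    intro u hu
    refine intervalIntegral.continuous_of_dominated_interval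
      (bound := fun _ => gmax * M) (fun s => hmeas s u) (fun s => hbound s u hu)
      intervalIntegrable_const ?_
    exact Filter.Eventually.of_forall fun v _ => continuous_const.mul (hQc v)
  have innerhigh : ∀ s, ∀ u ∈ Icc (0:ℝ) 1, ∀ b : ℝ,
      (∀ v ∈ Icc (0:ℝ) 1, G v u * Q s v ≤ b) →
      (∫ v in (0:ℝ)..1, G v u * Q s v) ≤ b := by
    intro s u hu b hb
    have := intervalIntegral.integral_mono_on (g := fun _ => b) (μ := volume)
      zero_le_one (hintg s u hu) intervalIntegrable_const hb
    simpa using this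
  have innerlow : ∀ s, ∀ u ∈ Icc (0:ℝ) 1, ∀ b : ℝ,
      (∀ v ∈ Icc (0:ℝ) 1, b ≤ G v u * Q s v) →
      b ≤ ∫ v in (0:ℝ)..1, G v u * Q s v := by
    intro s u hu b hb
    have := intervalIntegral.integral_mono_on (f := fun _ => b) (μ := volume)
      zero_le_one intervalIntegrable_const (hintg s u hu) hb
    simpa using this
  -- Step 1: Q is nonnegative on [0,T]×[0,1]
  have hQpos : ∀ t ∈ Icc (0:ℝ) T, ∀ u ∈ Icc (0:ℝ) 1, 0 ≤ Q t u := by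
    have h := iter_lemma T gmax M hgmax0 hM0 (fun t u => -Q t u)
      (fun t _ u _ => by have := abs_le.1 (hM t u); linarith [this.1]) ?_
    · intro t ht u hu; have := h t ht u hu; linarith
    intro t ht u hu c hc hcnn hcle
    have key : ∀ s ∈ Icc t T, -(gmax * c s) ≤ ∫ v in (0:ℝ)..1, G v u * Q s v := by
      intro s hs
      refine innerlow s u hu _ fun v hv => ?_
      have hG := hGbounds v hv u hu
      have hG0 : 0 ≤ G v u := le_trans hgmin hG.1
      have h1 : -(c s) ≤ Q s v := by have := hcle s hs v hv; linarith
      have hcs : 0 ≤ c s := hcnn s hs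
      nlinarith [mul_nonneg hG0 (by linarith : 0 ≤ Q s v + c s),
        mul_le_mul_of_nonneg_right hG.2 hcs]
    have mono : (∫ s in t..T, -(gmax * c s))
        ≤ ∫ s in t..T, ∫ v in (0:ℝ)..1, G v u * Q s v :=
      intervalIntegral.integral_mono_on ht.2
        (((continuous_const.mul hc).neg).intervalIntegrable t T)
        ((hFcont u hu).intervalIntegrable t T) key
    have hneg : (∫ s in t..T, -(gmax * c s)) = -(gmax * ∫ s in t..T, c s) := by
      rw [intervalIntegral.integral_neg, intervalIntegral.integral_const_mul]
    rw [hneg] at mono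
    have hq := hQeq t ht u hu
    linarith
  -- exp identity
  have hE : ∀ g t : ℝ, Real.exp (g * (T - t)) = 1 + ∫ s in t..T, g * Real.exp (g * (T - s)) := by
    intro g t; rw [exp_integral]; ring
  have hEcont : ∀ g : ℝ, Continuous fun s : ℝ => g * Real.exp (g * (T - s)) := by
    intro g
    exact continuous_const.mul (Real.continuous_exp.comp
      (continuous_const.mul (continuous_const.sub continuous_id)))
  -- Step 2: upper bound
  have hstepUp : ∀ t ∈ Icc (0:ℝ) T, ∀ u ∈ Icc (0:ℝ) 1, ∀ c : ℝ → ℝ, Continuous c →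
      (∀ s ∈ Icc t T, 0 ≤ c s) →
      (∀ s ∈ Icc t T, ∀ v ∈ Icc (0:ℝ) 1,
        (fun t u => Q t u - Real.exp (gmax * (T - t))) s v ≤ c s) →
      (fun t u => Q t u - Real.exp (gmax * (T - t))) t u ≤ gmax * ∫ s in t..T, c s := by
    intro t ht u hu c hc hcnn hcle
    have key : ∀ s ∈ Icc t T, (∫ v in (0:ℝ)..1, G v u * Q s v)
        ≤ gmax * Real.exp (gmax * (T - s)) + gmax * c s := by
      intro s hs
      refine innerhigh s u hu _ fun v hv => ?_
      have hG := hGbounds v hv u hu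
      have hQ0 : 0 ≤ Q s v := hQpos s ⟨le_trans ht.1 hs.1, hs.2⟩ v hv
      have h1 : Q s v ≤ Real.exp (gmax * (T - s)) + c s := by
        have := hcle s hs v hv; dsimp at this; linarith
      nlinarith [mul_le_mul_of_nonneg_right hG.2 hQ0,
        mul_le_mul_of_nonneg_left h1 hgmax0]
    have mono : (∫ s in t..T, ∫ v in (0:ℝ)..1, G v u * Q s v)
        ≤ ∫ s in t..T, (gmax * Real.exp (gmax * (T - s)) + gmax * c s) :=
      intervalIntegral.integral_mono_on ht.2 ((hFcont u hu).intervalIntegrable t T)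
        (((hEcont gmax).add (continuous_const.mul hc)).intervalIntegrable t T) key
    have hsplit : (∫ s in t..T, (gmax * Real.exp (gmax * (T - s)) + gmax * c s))
        = (Real.exp (gmax * (T - t)) - 1) + gmax * ∫ s in t..T, c s := by
      rw [intervalIntegral.integral_add (g := fun s => gmax * c s) ((hEcont gmax).intervalIntegrable t T)
        ((continuous_const.mul hc).intervalIntegrable t T), exp_integral,
        intervalIntegral.integral_const_mul]
    rw [hsplit] at mono
    have hq := hQeq t ht u hu
    dsimp only
    linarith
  have hupper := iter_lemma T gmax (M + Real.exp (gmax * T)) hgmax0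
    (by positivity) (fun t u => Q t u - Real.exp (gmax * (T - t)))
    (fun t ht u hu => by
      have h1 := (abs_le.1 (hM t u)).2
      have h2 := Real.exp_pos (gmax * (T - t))
      have h3 := Real.exp_pos (gmax * T)
      linarith)
    (fun t ht u hu c hc hcnn hcle => by
      have := hstepUp t ht u hu c hc hcnn hcle; dsimp only at this ⊢; linarith)
  -- Step 3: lower bound
  have hstepLow : ∀ t ∈ Icc (0:ℝ) T, ∀ u ∈ Icc (0:ℝ) 1, ∀ c : ℝ → ℝ, Continuous c →
      (∀ s ∈ Icc t T, 0 ≤ c s) →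
      (∀ s ∈ Icc t T, ∀ v ∈ Icc (0:ℝ) 1,
        (fun t u => Real.exp (gmin * (T - t)) - Q t u) s v ≤ c s) →
      (fun t u => Real.exp (gmin * (T - t)) - Q t u) t u ≤ gmin * ∫ s in t..T, c s := by
    intro t ht u hu c hc hcnn hcle
    have key : ∀ s ∈ Icc t T, gmin * Real.exp (gmin * (T - s)) - gmin * c s
        ≤ ∫ v in (0:ℝ)..1, G v u * Q s v := by
      intro s hs
      refine innerlow s u hu _ fun v hv => ?_
      have hG := hGbounds v hv u hu
      have hQ0 : 0 ≤ Q s v := hQpos s ⟨le_trans ht.1 hs.1, hs.2⟩ v hv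
      have h1 : Real.exp (gmin * (T - s)) - c s ≤ Q s v := by
        have := hcle s hs v hv; dsimp at this; linarith
      nlinarith [mul_le_mul_of_nonneg_right hG.1 hQ0,
        mul_le_mul_of_nonneg_left h1 hgmin]
    have mono : (∫ s in t..T, (gmin * Real.exp (gmin * (T - s)) - gmin * c s))
        ≤ ∫ s in t..T, ∫ v in (0:ℝ)..1, G v u * Q s v :=
      intervalIntegral.integral_mono_on ht.2
        (((hEcont gmin).sub (continuous_const.mul hc)).intervalIntegrable t T)
        ((hFcont u hu).intervalIntegrable t T) key
    have hsplit : (∫ s in t..T, (gmin * Real.exp (gmin * (T - s)) - gmin * c s))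
        = (Real.exp (gmin * (T - t)) - 1) - gmin * ∫ s in t..T, c s := by
      rw [intervalIntegral.integral_sub (g := fun s => gmin * c s) ((hEcont gmin).intervalIntegrable t T)
        ((continuous_const.mul hc).intervalIntegrable t T), exp_integral,
        intervalIntegral.integral_const_mul]
    rw [hsplit] at mono
    have hq := hQeq t ht u hu
    dsimp only
    linarith
  have hlower := iter_lemma T gmin (Real.exp (gmin * T) + M) hgmin
    (by positivity) (fun t u => Real.exp (gmin * (T - t)) - Q t u)
    (fun t ht u hu => by
      have h1 := (abs_le.1 (hM t u)).1
      have h2 : Real.exp (gmin * (T - t)) ≤ Real.exp (gmin * T) :=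
        Real.exp_le_exp.2 (mul_le_mul_of_nonneg_left (by linarith [ht.1]) hgmin)
      linarith) hstepLow
  intro t ht u hu
  have h1 := hlower t ht u hu
  have h2 := hupper t ht u hu
  exact ⟨by linarith, by linarith⟩
end
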